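/- arXiv:1602.06735 — 2 statements merged into one kernel-verified Lean document; each statement's English description precedes it below -/
import Mathlib

section
/- Let S be an association scheme on a finite set X. For all u, v, w in S, lcm(n_u, n_v) divides a_{uvw} · n_w. -/
open Set

/-- The diagonal relation `1_X` on a set `X`. -/
def schemeDiag (X : Type*) : Set (X × X) := {p | p.1 = p.2}

/-- The transpose `s*` of a relation `s`. -/
def schemeTransp {X : Type*} (s : Set (X × X)) : Set (X × X) := {p | (p.2, p.1) ∈ s}

/-- An association scheme on a finite set `X`: a partition of `X × X` containing the
diagonal, closed under transposition, with well-defined intersection numbers `a s t u`. -/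
structure AssocScheme (X : Type*) [Fintype X] where
  rels : Set (Set (X × X))
  partition : ∀ p : X × X, ∃! s, s ∈ rels ∧ p ∈ s
  diag_mem : schemeDiag X ∈ rels
  transpose_mem : ∀ s ∈ rels, schemeTransp s ∈ rels
  a : Set (X × X) → Set (X × X) → Set (X × X) → ℕ
  a_spec : ∀ s ∈ rels, ∀ t ∈ rels, ∀ u ∈ rels, ∀ x y : X, (x, y) ∈ u →
    a s t u = Nat.card {z : X | (x, z) ∈ s ∧ (z, y) ∈ t}

namespace AssocScheme

variable {X : Type*} [Fintype X] (S : AssocScheme X)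

/-- The valency `n_s = a_{s s* 1_X}` of a relation. -/
def val (s : Set (X × X)) : ℕ := S.a s (schemeTransp s) (schemeDiag X)

/-- The complex product `uv` of two relations. -/
def cprod (u v : Set (X × X)) : Set (Set (X × X)) := {s ∈ S.rels | S.a u v s ≠ 0}

/-- The complex product `PQ` of two sets of relations. -/
def sprod (P Q : Set (Set (X × X))) : Set (Set (X × X)) :=
  {s ∈ S.rels | ∃ p ∈ P, ∃ q ∈ Q, S.a p q s ≠ 0}

/-- A (nonempty) closed subset of the scheme. -/
def IsClosedSubset (T : Set (Set (X × X))) : Prop :=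
  T.Nonempty ∧ T ⊆ S.rels ∧ ∀ u ∈ T, ∀ v ∈ T, S.cprod u v ⊆ T

/-- The thin radical `O_θ(S)`: the set of relations of valency 1. -/
def thinRadical : Set (Set (X × X)) := {s ∈ S.rels | S.val s = 1}

/-- The smallest closed subset containing all `t* t` for `t ∈ T`. -/
def resOf (T : Set (Set (X × X))) : Set (Set (X × X)) :=
  ⋂₀ {U | S.IsClosedSubset U ∧ ∀ t ∈ T, S.cprod (schemeTransp t) t ⊆ U}

/-- The thin residue `O^θ(S) = ⟨⋃_{s ∈ S} s* s⟩`. -/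
def thinResidue : Set (Set (X × X)) := S.resOf S.rels

/-- The order `n_U = ∑_{u ∈ U} n_u` of a set of relations. -/
noncomputable def nOrd (U : Set (Set (X × X))) : ℕ := ∑ᶠ u ∈ U, S.val u

/-- Commutativity of the scheme. -/
def IsCommutative : Prop :=
  ∀ u ∈ S.rels, ∀ v ∈ S.rels, ∀ w ∈ S.rels, S.a u v w = S.a v u w

/-- `S` is a `p`-scheme: `|X|` and all valencies are powers of the prime `p`. -/
def IsPScheme (p : ℕ) : Prop :=
  p.Prime ∧ (∃ n, Fintype.card X = p ^ n) ∧ ∀ s ∈ S.rels, ∃ i, S.val s = p ^ i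

/-- `S` is schurian: its relations are the orbitals of a transitive permutation group. -/
def IsSchurian : Prop :=
  ∃ G : Subgroup (Equiv.Perm X), (∀ x y : X, ∃ g ∈ G, g x = y) ∧
    S.rels = {o | ∃ q : X × X, o = {r : X × X | ∃ g ∈ G, (g q.1, g q.2) = r}}

/-- The right stabilizer `R(s) = {t | st = s}`. -/
def Rstab (s : Set (X × X)) : Set (Set (X × X)) := {t ∈ S.rels | S.cprod s t = {s}}

/-- The left stabilizer `L(s) = {t | ts = s}`. -/
def Lstab (s : Set (X × X)) : Set (Set (X × X)) := {t ∈ S.rels | S.cprod t s = {s}}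

/-- A faithful map: `r(x,y) = r(φ x, φ y)` for all `x, y`. -/
def IsFaithful (φ : X → X) : Prop :=
  ∀ x y : X, ∀ s ∈ S.rels, (x, y) ∈ s → (φ x, φ y) ∈ s

/-- An automorphism of the scheme. -/
def IsAutomorphism (φ : X → X) : Prop := Function.Bijective φ ∧ S.IsFaithful φ

/-- The quotient scheme `S // T` is isomorphic to the cyclic group `C_m`:
there is a surjection `f : X → ZMod m` whose difference map classifies the
double-coset relations `T s T`. -/
def QuotIsoCyclic (T : Set (Set (X × X))) (m : ℕ) : Prop :=
  ∃ f : X → ZMod m, Function.Surjective f ∧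
    ∀ x y x' y' : X, (f y - f x = f y' - f x') ↔
      ∃ s ∈ S.rels, (x, y) ∈ s ∧ ∃ s' ∈ S.sprod (S.sprod T {s}) T, (x', y') ∈ s'

/-- A thin closed subset `T` is isomorphic, as a group under the relational
product, to the additive group `G`. -/
def ThinGroupIso (T : Set (Set (X × X))) (G : Type*) [AddGroup G] : Prop :=
  (∀ t ∈ T, S.val t = 1) ∧ ∃ f : Set (X × X) → G, Set.BijOn f T Set.univ ∧
    ∀ t1 ∈ T, ∀ t2 ∈ T, ∀ u, S.cprod t1 t2 = {u} → f u = f t1 + f t2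

end AssocScheme

/-- The set of relations of the wreath product `F ≀ H`. -/
def wreathRels {W Y : Type*} [Fintype W] [Fintype Y]
    (F : AssocScheme W) (H : AssocScheme Y) : Set (Set ((W × Y) × (W × Y))) :=
  {r | ∃ f ∈ F.rels, r = {p : (W × Y) × (W × Y) | p.1.2 = p.2.2 ∧ (p.1.1, p.2.1) ∈ f}} ∪
  {r | ∃ h ∈ H.rels, h ≠ schemeDiag Y ∧
    r = {p : (W × Y) × (W × Y) | (p.1.2, p.2.2) ∈ h}}

section Stmt4Aux

open Finset

variable {X : Type*} [Fintype X] (S : AssocScheme X)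

/-- Intersection numbers count a filter. -/
lemma stmt4_card_filter_eq_a [DecidableEq X] {s t r : Set (X × X)}
    (hs : s ∈ S.rels) (ht : t ∈ S.rels) (hr : r ∈ S.rels) {x y : X} (hxy : (x, y) ∈ r)
    [DecidablePred fun z => (x, z) ∈ s ∧ (z, y) ∈ t] :
    (Finset.univ.filter fun z => (x, z) ∈ s ∧ (z, y) ∈ t).card = S.a s t r := by
  classical
  rw [S.a_spec s hs t ht r hr x y hxy]
  have hset : {z : X | (x, z) ∈ s ∧ (z, y) ∈ t}
      = ↑(Finset.univ.filter fun z => (x, z) ∈ s ∧ (z, y) ∈ t) := by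
    ext z; simp
  rw [hset, Nat.card_coe_set_eq, Set.ncard_coe_finset]

/-- Valency counts out-neighbours from any point. -/
lemma stmt4_val_eq [DecidableEq X] {s : Set (X × X)} (hs : s ∈ S.rels) (x : X)
    [DecidablePred fun z => (x, z) ∈ s] :
    (Finset.univ.filter fun z => (x, z) ∈ s).card = S.val s := by
  classical
  have h := stmt4_card_filter_eq_a S hs (S.transpose_mem s hs) S.diag_mem
    (show (x, x) ∈ schemeDiag X from rfl)
  have heq : (Finset.univ.filter fun z => (x, z) ∈ s ∧ (z, x) ∈ schemeTransp s)
      = Finset.univ.filter fun z => (x, z) ∈ s := by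
    ext z; simp [schemeTransp]
  rw [AssocScheme.val, ← h, heq]

/-- Product of indicators. -/
lemma stmt4_ind_mul {P Q R : Prop} [Decidable P] [Decidable Q] [Decidable R]
    (h : R ↔ (P ∧ Q)) :
    (if P then (1 : ℕ) else 0) * (if Q then 1 else 0) = if R then 1 else 0 := by
  split_ifs <;> simp_all

end Stmt4Aux

/-- `lcm(n_u, n_v) ∣ a_{uvw} n_w`. -/
theorem stmt4 {X : Type*} [Fintype X] (S : AssocScheme X)
    (u v w : Set (X × X)) (hu : u ∈ S.rels) (hv : v ∈ S.rels) (hw : w ∈ S.rels) :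
    Nat.lcm (S.val u) (S.val v) ∣ S.a u v w * S.val w := by
  classical
  rcases isEmpty_or_nonempty X with hX | hX
  · -- degenerate case: every relation is empty, all quantities coincide
    have huv : u = v := Subsingleton.elim u v
    have huw : u = w := Subsingleton.elim u w
    have htu : schemeTransp u = v := Subsingleton.elim _ _
    have hdu : schemeDiag X = w := Subsingleton.elim _ _
    have h1 : S.val u = S.a u v w := by
      rw [AssocScheme.val, htu, hdu]
    have h2 : S.val v = S.val u := by rw [huv]
    have h3 : S.val w = S.val u := by rw [huw]
    rw [h2, Nat.lcm_self, h1]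
    exact dvd_mul_right _ _
  · -- main case via double counting
    set i : Set (X × X) → X → X → ℕ := fun s a b => if (a, b) ∈ s then 1 else 0 with hi
    have hind : ∀ (s : Set (X × X)) (a b : X) (c : ℕ),
        i s a b * c = if (a, b) ∈ s then c else 0 := by
      intro s a b c; simp only [hi]; split_ifs <;> ring
    -- the triple count
    set A : ℕ := ∑ x : X, ∑ y : X, ∑ z : X, i u x z * i v z y * i w x y with hA
    have hval : ∀ (s : Set (X × X)), s ∈ S.rels → ∀ x : X,
        (∑ z : X, i s x z) = S.val s := by
      intro s hs x
      rw [← stmt4_val_eq S hs x, Finset.card_filter]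
    -- Grouping 1: over (x, y) ∈ w
    have hg1 : A = Fintype.card X * (S.a u v w * S.val w) := by
      have : ∀ x y : X, (∑ z : X, i u x z * i v z y * i w x y)
          = S.a u v w * i w x y := by
        intro x y
        by_cases hxy : (x, y) ∈ w
        · have hcnt : (∑ z : X, i u x z * i v z y) = S.a u v w := by
            rw [← stmt4_card_filter_eq_a S hu hv hw hxy, Finset.card_filter]
            refine Finset.sum_congr rfl fun z _ => ?_
            simp only [hi]
            exact stmt4_ind_mul Iff.rfl
          calc (∑ z : X, i u x z * i v z y * i w x y)
              = (∑ z : X, i u x z * i v z y) * i w x y := by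
                rw [← Finset.sum_mul]
            _ = S.a u v w * i w x y := by rw [hcnt]
        · simp only [hi, hxy, if_false, mul_zero, Finset.sum_const_zero]
      calc A = ∑ x : X, ∑ y : X, S.a u v w * i w x y := by
              rw [hA]; exact Finset.sum_congr rfl fun x _ =>
                Finset.sum_congr rfl fun y _ => this x y
        _ = ∑ x : X, S.a u v w * S.val w := by
              refine Finset.sum_congr rfl fun x _ => ?_
              rw [← Finset.mul_sum, hval w hw x]
        _ = Fintype.card X * (S.a u v w * S.val w) := by
              rw [Finset.sum_const, Finset.card_univ, smul_eq_mul]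
    -- Grouping 2: over (x, z) ∈ u
    have hg2 : A = Fintype.card X * (S.val u * S.a w (schemeTransp v) u) := by
      have hswap : A = ∑ x : X, ∑ z : X, ∑ y : X, i u x z * i v z y * i w x y := by
        rw [hA]; exact Finset.sum_congr rfl fun x _ => Finset.sum_comm
      have : ∀ x z : X, (∑ y : X, i u x z * i v z y * i w x y)
          = i u x z * S.a w (schemeTransp v) u := by
        intro x z
        by_cases hxz : (x, z) ∈ u
        · have hcnt : (∑ y : X, i v z y * i w x y) = S.a w (schemeTransp v) u := by
            rw [← stmt4_card_filter_eq_a S hw (S.transpose_mem v hv) hu hxz,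
              Finset.card_filter]
            refine Finset.sum_congr rfl fun y _ => ?_
            simp only [hi]
            exact stmt4_ind_mul (by
              simp only [schemeTransp, Set.mem_setOf_eq]; tauto)
          calc (∑ y : X, i u x z * i v z y * i w x y)
              = i u x z * ∑ y : X, i v z y * i w x y := by
                rw [Finset.mul_sum]
                exact Finset.sum_congr rfl fun y _ => by ring
            _ = i u x z * S.a w (schemeTransp v) u := by rw [hcnt]
        · simp only [hi, hxz, if_false, zero_mul, Finset.sum_const_zero]
      calc A = ∑ x : X, ∑ z : X, i u x z * S.a w (schemeTransp v) u := by
              rw [hswap]; exact Finset.sum_congr rfl fun x _ =>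
                Finset.sum_congr rfl fun z _ => this x z
        _ = ∑ x : X, S.val u * S.a w (schemeTransp v) u := by
              refine Finset.sum_congr rfl fun x _ => ?_
              rw [← Finset.sum_mul, hval u hu x]
        _ = Fintype.card X * (S.val u * S.a w (schemeTransp v) u) := by
              rw [Finset.sum_const, Finset.card_univ, smul_eq_mul]
    -- Grouping 3: over (z, y) ∈ v
    have hg3 : A = Fintype.card X * (S.val v * S.a (schemeTransp u) w v) := by
      have hswap : A = ∑ z : X, ∑ y : X, ∑ x : X, i u x z * i v z y * i w x y := by
        rw [hA]
        calc ∑ x : X, ∑ y : X, ∑ z : X, i u x z * i v z y * i w x y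
            = ∑ y : X, ∑ x : X, ∑ z : X, i u x z * i v z y * i w x y :=
              Finset.sum_comm
          _ = ∑ y : X, ∑ z : X, ∑ x : X, i u x z * i v z y * i w x y :=
              Finset.sum_congr rfl fun y _ => Finset.sum_comm
          _ = ∑ z : X, ∑ y : X, ∑ x : X, i u x z * i v z y * i w x y :=
              Finset.sum_comm
      have : ∀ z y : X, (∑ x : X, i u x z * i v z y * i w x y)
          = i v z y * S.a (schemeTransp u) w v := by
        intro z y
        by_cases hzy : (z, y) ∈ v
        · have hcnt : (∑ x : X, i u x z * i w x y) = S.a (schemeTransp u) w v := by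
            rw [← stmt4_card_filter_eq_a S (S.transpose_mem u hu) hw hv hzy,
              Finset.card_filter]
            refine Finset.sum_congr rfl fun x _ => ?_
            simp only [hi]
            exact stmt4_ind_mul (by
              simp only [schemeTransp, Set.mem_setOf_eq])
          calc (∑ x : X, i u x z * i v z y * i w x y)
              = i v z y * ∑ x : X, i u x z * i w x y := by
                rw [Finset.mul_sum]
                exact Finset.sum_congr rfl fun x _ => by ring
            _ = i v z y * S.a (schemeTransp u) w v := by rw [hcnt]
        · simp only [hi, hzy, if_false, zero_mul, mul_zero, Finset.sum_const_zero]
      calc A = ∑ z : X, ∑ y : X, i v z y * S.a (schemeTransp u) w v := by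
              rw [hswap]; exact Finset.sum_congr rfl fun z _ =>
                Finset.sum_congr rfl fun y _ => this z y
        _ = ∑ z : X, S.val v * S.a (schemeTransp u) w v := by
              refine Finset.sum_congr rfl fun z _ => ?_
              rw [← Finset.sum_mul, hval v hv z]
        _ = Fintype.card X * (S.val v * S.a (schemeTransp u) w v) := by
              rw [Finset.sum_const, Finset.card_univ, smul_eq_mul]
    have hcard : (Fintype.card X : ℕ) ≠ 0 := Fintype.card_ne_zero
    have e2 : S.a u v w * S.val w = S.val u * S.a w (schemeTransp v) u :=
      Nat.eq_of_mul_eq_mul_left (Nat.pos_of_ne_zero hcard) (by rw [← hg1, hg2])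
    have e3 : S.a u v w * S.val w = S.val v * S.a (schemeTransp u) w v :=
      Nat.eq_of_mul_eq_mul_left (Nat.pos_of_ne_zero hcard) (by rw [← hg1, hg3])
    exact Nat.lcm_dvd ⟨_, e2⟩ ⟨_, e3⟩
end

section
/- Let S be a commutative p-scheme on X of order p^n such that the thin radical O_θ(S) has order p^{n-1}. Then S is schurian. -/
set_option linter.unusedSectionVars false
set_option linter.unusedVariables false
set_option maxHeartbeats 1600000


open Set

namespace AssocScheme

variable {X : Type*} [Fintype X] (S : AssocScheme X)

-- ====================== auxiliary development ======================

theorem card_fiber_sum {α β : Type*} [Fintype α] [Fintype β] (f : α → β) :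
    Fintype.card α = ∑ b : β, Nat.card {a | f a = b} := by
  classical
  rw [← Finset.card_univ, Finset.card_eq_sum_card_fiberwise (fun x _ => Finset.mem_univ (f x))]
  refine Finset.sum_congr rfl fun b _ => ?_
  rw [Nat.card_eq_fintype_card]
  simp [Fintype.card_subtype]

@[simp] lemma mem_transp {s : Set (X × X)} {x y : X} :
    (x, y) ∈ schemeTransp s ↔ (y, x) ∈ s := Iff.rfl

@[simp] lemma transp_transp (s : Set (X × X)) : schemeTransp (schemeTransp s) = s := by
  ext ⟨x, y⟩; rfl

@[simp] lemma transp_diag : schemeTransp (schemeDiag X) = schemeDiag X := by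
  ext ⟨x, y⟩; simp [schemeTransp, schemeDiag, eq_comm]

@[simp] lemma mem_diag {x y : X} : (x, y) ∈ schemeDiag X ↔ x = y := Iff.rfl

lemma rel_eq {s u : Set (X × X)} {q : X × X} (hs : s ∈ S.rels) (hu : u ∈ S.rels)
    (h1 : q ∈ s) (h2 : q ∈ u) : s = u := by
  obtain ⟨r, -, hun⟩ := S.partition q
  rw [hun s ⟨hs, h1⟩, hun u ⟨hu, h2⟩]

/-- the unique relation containing `(x,y)`. -/
noncomputable def Rr (x y : X) : Set (X × X) :=
  Classical.epsilon fun s => s ∈ S.rels ∧ (x, y) ∈ s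

lemma Rr_spec (x y : X) : S.Rr x y ∈ S.rels ∧ (x, y) ∈ S.Rr x y := by
  obtain ⟨s, hs, -⟩ := S.partition (x, y)
  exact Classical.epsilon_spec (p := fun s => s ∈ S.rels ∧ (x, y) ∈ s) ⟨s, hs⟩

lemma Rr_mem (x y : X) : S.Rr x y ∈ S.rels := (S.Rr_spec x y).1

lemma mem_Rr (x y : X) : (x, y) ∈ S.Rr x y := (S.Rr_spec x y).2

lemma eq_Rr {s : Set (X × X)} (hs : s ∈ S.rels) {x y : X} (h : (x, y) ∈ s) :
    s = S.Rr x y :=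
  S.rel_eq hs (S.Rr_mem x y) h (S.mem_Rr x y)

lemma Rr_diag (x : X) : S.Rr x x = schemeDiag X :=
  (S.eq_Rr S.diag_mem (show (x, x) ∈ schemeDiag X from rfl)).symm

lemma Rr_transp (x y : X) : S.Rr y x = schemeTransp (S.Rr x y) :=
  (S.eq_Rr (S.transpose_mem _ (S.Rr_mem x y)) (by simpa using S.mem_Rr x y)).symm

lemma row_card {s : Set (X × X)} (hs : s ∈ S.rels) (x : X) :
    Nat.card {y | (x, y) ∈ s} = S.val s := by
  have h := S.a_spec s hs _ (S.transpose_mem s hs) _ S.diag_mem x x rfl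
  have hset : {z : X | (x, z) ∈ s ∧ (z, x) ∈ schemeTransp s} = {y : X | (x, y) ∈ s} := by
    ext z; simp [schemeTransp]
  rw [val, h, hset]

lemma row_nonempty {s : Set (X × X)} (hs : s ∈ S.rels) (hv : S.val s ≠ 0) (x : X) :
    ∃ y, (x, y) ∈ s := by
  have h := S.row_card hs x
  have h2 : Nat.card {y | (x, y) ∈ s} ≠ 0 := by rw [h]; exact hv
  obtain ⟨⟨y, hy⟩, -⟩ := Nat.card_ne_zero.mp h2
  exact ⟨y, hy⟩

/-- choice of an element in the row of `t` at `x`. -/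
noncomputable def sg (t : Set (X × X)) (x : X) : X :=
  @Classical.epsilon X ⟨x⟩ fun y => (x, y) ∈ t

lemma sg_spec {t : Set (X × X)} (ht : t ∈ S.rels) (hv : S.val t ≠ 0) (x : X) :
    (x, sg t x) ∈ t :=
  Classical.epsilon_spec (p := fun y => (x, y) ∈ t) (S.row_nonempty ht hv x)

lemma thin_val_ne {t : Set (X × X)} (ht : t ∈ S.thinRadical) : S.val t ≠ 0 := by
  rw [ht.2]; exact one_ne_zero

lemma sg_thin {t : Set (X × X)} (ht : t ∈ S.thinRadical) (x : X) : (x, sg t x) ∈ t :=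
  S.sg_spec ht.1 (S.thin_val_ne ht) x

lemma mem_thin_iff {t : Set (X × X)} (ht : t ∈ S.thinRadical) {x y : X} :
    (x, y) ∈ t ↔ y = sg t x := by
  constructor
  · intro h
    have hc := S.row_card ht.1 x
    rw [ht.2] at hc
    obtain ⟨⟨z, hz⟩, hu⟩ := Nat.card_eq_one_iff_exists.mp hc
    have h1 := hu ⟨y, h⟩
    have h2 := hu ⟨sg t x, S.sg_thin ht x⟩
    rw [Subtype.ext_iff] at h1 h2
    simp only at h1 h2
    rw [h1, h2]
  · rintro rfl; exact S.sg_thin ht x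

lemma val_diag (hne : Nonempty X) : S.val (schemeDiag X) = 1 := by
  rw [← S.row_card S.diag_mem (Classical.arbitrary X)]
  rw [Nat.card_eq_one_iff_exists]
  exact ⟨⟨Classical.arbitrary X, rfl⟩, fun ⟨y, hy⟩ => Subtype.ext hy.symm⟩

lemma diag_thin (hne : Nonempty X) : schemeDiag X ∈ S.thinRadical :=
  ⟨S.diag_mem, S.val_diag hne⟩

include S in
lemma sg_diag (hne : Nonempty X) (x : X) : sg (schemeDiag X) x = x :=
  ((S.mem_thin_iff (S.diag_thin hne)).mp (show (x, x) ∈ schemeDiag X from rfl)).symm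

/-- Bundle of standing hypotheses for the development. -/
structure Nice (S : AssocScheme X) : Prop where
  comm : S.IsCommutative
  good : ∀ r ∈ S.rels, S.val r ≠ 0
  ne : Nonempty X

lemma mem_cprod_of {s s' u : Set (X × X)} (hs : s ∈ S.rels) (hs' : s' ∈ S.rels)
    (hu : u ∈ S.rels) {x y : X} (hxy : (x, y) ∈ u) {z : X}
    (h1 : (x, z) ∈ s) (h2 : (z, y) ∈ s') : u ∈ S.cprod s s' := by
  refine ⟨hu, ?_⟩
  rw [S.a_spec s hs s' hs' u hu x y hxy]
  exact Nat.card_ne_zero.mpr ⟨⟨z, h1, h2⟩, inferInstance⟩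

lemma exists_of_cprod {s s' u : Set (X × X)} (hs : s ∈ S.rels) (hs' : s' ∈ S.rels)
    (hcp : u ∈ S.cprod s s') {x y : X} (hxy : (x, y) ∈ u) :
    ∃ z, (x, z) ∈ s ∧ (z, y) ∈ s' := by
  have h := hcp.2
  rw [S.a_spec s hs s' hs' u hcp.1 x y hxy] at h
  obtain ⟨⟨z, hz⟩, -⟩ := Nat.card_ne_zero.mp h
  exact ⟨z, hz⟩

lemma cprod_comm (N : S.Nice) {s s' : Set (X × X)} (hs : s ∈ S.rels) (hs' : s' ∈ S.rels) :
    S.cprod s s' = S.cprod s' s := by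
  ext u
  constructor
  · rintro ⟨hu, ha⟩; exact ⟨hu, by rwa [N.comm s' hs' s hs u hu]⟩
  · rintro ⟨hu, ha⟩; exact ⟨hu, by rwa [N.comm s hs s' hs' u hu]⟩

/-- right product of a relation with a thin relation. -/
def dott (s t : Set (X × X)) : Set (X × X) := {q | ∃ z, (q.1, z) ∈ s ∧ q.2 = sg t z}

lemma mem_dott {s t : Set (X × X)} {x y : X} (h : (x, y) ∈ s) :
    (x, sg t y) ∈ dott s t := ⟨y, h, rfl⟩

lemma thin_transp (N : S.Nice) {t : Set (X × X)} (ht : t ∈ S.thinRadical) :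
    schemeTransp t ∈ S.thinRadical := by
  have hm := S.transpose_mem t ht.1
  refine ⟨hm, ?_⟩
  have h1 : ∀ b : X, Nat.card {a | sg t a = b} = S.val (schemeTransp t) := by
    intro b
    rw [← S.row_card hm b]
    have hset : {a | sg t a = b} = {y : X | (b, y) ∈ schemeTransp t} := by
      ext a
      simp only [mem_setOf_eq, mem_transp]
      rw [S.mem_thin_iff ht]
      exact eq_comm
    rw [hset]
  have h2 := card_fiber_sum (fun a : X => sg t a)
  rw [Finset.sum_congr rfl (fun b _ => h1 b), Finset.sum_const, Finset.card_univ,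
    smul_eq_mul] at h2
  have hX : Fintype.card X ≠ 0 := by
    have : (0 : ℕ) < Fintype.card X := @Fintype.card_pos X _ N.ne
    omega
  have := Nat.eq_of_mul_eq_mul_left (Nat.pos_of_ne_zero hX)
    (h2.symm.trans (mul_one (Fintype.card X)).symm)
  exact this

lemma sg_transp_sg (N : S.Nice) {t : Set (X × X)} (ht : t ∈ S.thinRadical) (x : X) :
    sg (schemeTransp t) (sg t x) = x :=
  ((S.mem_thin_iff (S.thin_transp N ht)).mp (by simpa using S.sg_thin ht x)).symm

lemma sg_sg_transp (N : S.Nice) {t : Set (X × X)} (ht : t ∈ S.thinRadical) (x : X) :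
    sg t (sg (schemeTransp t) x) = x := by
  have := S.sg_transp_sg N (S.thin_transp N ht) x
  rwa [transp_transp] at this

lemma sg_inj (N : S.Nice) {t : Set (X × X)} (ht : t ∈ S.thinRadical) {x x' : X}
    (h : sg t x = sg t x') : x = x' := by
  have h1 := S.sg_transp_sg N ht x
  have h2 := S.sg_transp_sg N ht x'
  rw [← h1, ← h2, h]

lemma dott_spec (N : S.Nice) {s t : Set (X × X)} (hs : s ∈ S.rels)
    (ht : t ∈ S.thinRadical) :
    dott s t ∈ S.rels ∧ S.cprod s t = {dott s t} := by
  have hne := N.ne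
  set x0 := Classical.arbitrary X with hx0
  set y0 := sg s x0 with hy0
  have hxy0 : (x0, y0) ∈ s := S.sg_spec hs (N.good s hs) x0
  have hty0 : (y0, sg t y0) ∈ t := S.sg_thin ht y0
  set u := S.Rr x0 (sg t y0) with hu
  have humem : u ∈ S.rels := S.Rr_mem _ _
  have hucp : u ∈ S.cprod s t := S.mem_cprod_of hs ht.1 humem (S.mem_Rr _ _) hxy0 hty0
  have hsub : ∀ u' ∈ S.cprod s t, u' ⊆ dott s t := by
    intro u' hcp q hq
    obtain ⟨z, h1, h2⟩ := S.exists_of_cprod hs ht.1 hcp hq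
    exact ⟨z, h1, (S.mem_thin_iff ht).mp h2⟩
  have hscp : s ∈ S.cprod u (schemeTransp t) :=
    S.mem_cprod_of humem (S.transpose_mem t ht.1) hs hxy0 (S.mem_Rr _ _) (by simpa using hty0)
  have hsup : dott s t ⊆ u := by
    rintro ⟨x, y'⟩ ⟨y, hxy, rfl⟩
    obtain ⟨z, h1, h2⟩ := S.exists_of_cprod humem (S.transpose_mem t ht.1) hscp hxy
    have hz : z = sg t y := (S.mem_thin_iff ht).mp (by simpa using h2)
    rwa [← hz]
  have heq : dott s t = u := subset_antisymm hsup (hsub u hucp)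
  refine ⟨heq ▸ humem, ?_⟩
  ext u'
  simp only [Set.mem_singleton_iff]
  constructor
  · intro hcp
    obtain ⟨y, hy⟩ := S.row_nonempty hcp.1 (N.good _ hcp.1) x0
    exact S.rel_eq hcp.1 (heq ▸ humem) hy (hsub u' hcp hy)
  · rintro rfl
    exact heq ▸ hucp

lemma dott_rels (N : S.Nice) {s t : Set (X × X)} (hs : s ∈ S.rels)
    (ht : t ∈ S.thinRadical) : dott s t ∈ S.rels := (S.dott_spec N hs ht).1

lemma cprod_dott (N : S.Nice) {s t : Set (X × X)} (hs : s ∈ S.rels)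
    (ht : t ∈ S.thinRadical) : S.cprod s t = {dott s t} := (S.dott_spec N hs ht).2

lemma dott_thin (N : S.Nice) {t1 t2 : Set (X × X)} (h1 : t1 ∈ S.thinRadical)
    (h2 : t2 ∈ S.thinRadical) : dott t1 t2 ∈ S.thinRadical := by
  haveI := N.ne
  refine ⟨S.dott_rels N h1.1 h2, ?_⟩
  have hx : ∀ x : X, {y | (x, y) ∈ dott t1 t2} = {sg t2 (sg t1 x)} := by
    intro x
    ext y
    simp only [mem_setOf_eq, Set.mem_singleton_iff, dott]
    constructor
    · rintro ⟨z, hz, rfl⟩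
      rw [(S.mem_thin_iff h1).mp hz]
    · rintro rfl
      exact ⟨sg t1 x, S.sg_thin h1 x, rfl⟩
  rw [← S.row_card (S.dott_rels N h1.1 h2) (Classical.arbitrary X), hx]
  simp

lemma sg_dott (N : S.Nice) {t1 t2 : Set (X × X)} (h1 : t1 ∈ S.thinRadical)
    (h2 : t2 ∈ S.thinRadical) (x : X) : sg (dott t1 t2) x = sg t2 (sg t1 x) :=
  ((S.mem_thin_iff (S.dott_thin N h1 h2)).mp
    (mem_dott (S.sg_thin h1 x))).symm

lemma dotl_spec (N : S.Nice) {t u : Set (X × X)} (ht : t ∈ S.thinRadical)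
    (hu : u ∈ S.rels) :
    S.cprod t u = {{q : X × X | (sg t q.1, q.2) ∈ u}} := by
  have hne := N.ne
  set L := {q : X × X | (sg t q.1, q.2) ∈ u} with hL
  set x1' := Classical.arbitrary X with hx1'
  set y1 := sg u x1' with hy1
  have hx1'y1 : (x1', y1) ∈ u := S.sg_spec hu (N.good u hu) x1'
  set x1 := sg (schemeTransp t) x1' with hx1
  have hsgx1 : sg t x1 = x1' := S.sg_sg_transp N ht x1'
  have hx1x1' : (x1, x1') ∈ t := by rw [← hsgx1]; exact S.sg_thin ht x1
  set u' := S.Rr x1 y1 with hu'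
  have hu'mem : u' ∈ S.rels := S.Rr_mem _ _
  have hu'cp : u' ∈ S.cprod t u := S.mem_cprod_of ht.1 hu hu'mem (S.mem_Rr _ _) hx1x1' hx1'y1
  have hsub : ∀ u'' ∈ S.cprod t u, u'' ⊆ L := by
    intro u'' hcp q hq
    obtain ⟨z, h1, h2⟩ := S.exists_of_cprod ht.1 hu hcp hq
    have : z = sg t q.1 := (S.mem_thin_iff ht).mp h1
    simpa [hL, ← this] using h2
  have hucp2 : u ∈ S.cprod (schemeTransp t) u' := by
    refine S.mem_cprod_of (S.transpose_mem t ht.1) hu'mem hu hx1'y1 (z := x1) ?_ (S.mem_Rr _ _)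
    simpa using hx1x1'
  have hsup : L ⊆ u' := by
    rintro ⟨x, y⟩ hxy
    obtain ⟨z, h1, h2⟩ := S.exists_of_cprod (S.transpose_mem t ht.1) hu'mem hucp2 hxy
    have hz : sg t x = sg t z := (S.mem_thin_iff ht).mp (by simpa using h1)
    have : z = x := (S.sg_inj N ht hz.symm)
    rwa [this] at h2
  have heq : L = u' := subset_antisymm hsup (hsub u' hu'cp)
  rw [heq]
  ext u''
  simp only [Set.mem_singleton_iff]
  constructor
  · intro hcp
    obtain ⟨y, hy⟩ := S.row_nonempty hcp.1 (N.good _ hcp.1) x1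
    exact S.rel_eq hcp.1 hu'mem hy (heq ▸ hsub u'' hcp hy)
  · rintro rfl
    exact hu'cp

lemma faithful_sg (N : S.Nice) {t : Set (X × X)} (ht : t ∈ S.thinRadical) :
    S.IsFaithful (sg t) := by
  intro x y u hu hxy
  have h1 := S.cprod_dott N hu ht
  have h2 := S.dotl_spec N ht hu
  have h3 : dott u t = {q : X × X | (sg t q.1, q.2) ∈ u} := by
    have := h1.symm.trans ((S.cprod_comm N hu ht.1).trans h2)
    exact Set.singleton_eq_singleton_iff.mp this
  have h4 : (x, sg t y) ∈ dott u t := mem_dott hxy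
  rw [h3] at h4
  exact h4

lemma thin_ext (N : S.Nice) {t t' : Set (X × X)} (ht : t ∈ S.thinRadical)
    (ht' : t' ∈ S.thinRadical) (h : ∀ x, sg t x = sg t' x) : t = t' := by
  haveI := N.ne
  set x0 := Classical.arbitrary X
  refine S.rel_eq ht.1 ht'.1 (S.sg_thin ht x0) ?_
  rw [(S.mem_thin_iff ht'), ← h x0]

lemma dott_assoc (N : S.Nice) {s t1 t2 : Set (X × X)} (h1 : t1 ∈ S.thinRadical)
    (h2 : t2 ∈ S.thinRadical) :
    dott (dott s t1) t2 = dott s (dott t1 t2) := by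
  ext ⟨x, y⟩
  simp only [dott, mem_setOf_eq]
  constructor
  · rintro ⟨z, ⟨w, hw, rfl⟩, rfl⟩
    exact ⟨w, hw, (S.sg_dott N h1 h2 w).symm⟩
  · rintro ⟨w, hw, rfl⟩
    exact ⟨sg t1 w, ⟨w, hw, rfl⟩, S.sg_dott N h1 h2 w⟩

lemma dott_comm (N : S.Nice) {t1 t2 : Set (X × X)} (h1 : t1 ∈ S.thinRadical)
    (h2 : t2 ∈ S.thinRadical) : dott t1 t2 = dott t2 t1 := by
  have e1 := S.cprod_dott N h1.1 h2
  have e2 := S.cprod_dott N h2.1 h1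
  have := (e1.symm.trans ((S.cprod_comm N h1.1 h2.1).trans e2))
  exact Set.singleton_eq_singleton_iff.mp this

lemma sg_swap (N : S.Nice) {t1 t2 : Set (X × X)} (h1 : t1 ∈ S.thinRadical)
    (h2 : t2 ∈ S.thinRadical) (x : X) : sg t2 (sg t1 x) = sg t1 (sg t2 x) := by
  rw [← S.sg_dott N h1 h2, ← S.sg_dott N h2 h1, S.dott_comm N h1 h2]

lemma dott_diag (N : S.Nice) (s : Set (X × X)) : dott s (schemeDiag X) = s := by
  ext ⟨x, y⟩
  simp only [dott, mem_setOf_eq]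
  constructor
  · rintro ⟨z, hz, rfl⟩
    rwa [S.sg_diag N.ne z]
  · intro h
    exact ⟨y, h, (S.sg_diag N.ne y).symm⟩

lemma dott_transp_self (N : S.Nice) {t : Set (X × X)} (ht : t ∈ S.thinRadical) :
    dott t (schemeTransp t) = schemeDiag X := by
  refine S.thin_ext N (S.dott_thin N ht (S.thin_transp N ht)) (S.diag_thin N.ne) fun x => ?_
  rw [S.sg_dott N ht (S.thin_transp N ht), S.sg_transp_sg N ht, S.sg_diag N.ne]

lemma dott_transp (N : S.Nice) {s t : Set (X × X)} (hs : s ∈ S.rels)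
    (ht : t ∈ S.thinRadical) :
    schemeTransp (dott s t) = dott (schemeTransp s) (schemeTransp t) := by
  haveI := N.ne
  set x0 := Classical.arbitrary X
  set y0 := sg s x0 with hy0
  have hxy0 : (x0, y0) ∈ s := S.sg_spec hs (N.good s hs) x0
  refine S.rel_eq (S.transpose_mem _ (S.dott_rels N hs ht))
    (S.dott_rels N (S.transpose_mem s hs) (S.thin_transp N ht))
    (q := (sg t y0, x0)) (by simpa using mem_dott (t := t) hxy0) ?_
  have h1 : (sg t x0, sg t y0) ∈ s := S.faithful_sg N ht x0 y0 s hs hxy0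
  have h2 : (sg t y0, sg t x0) ∈ schemeTransp s := by simpa using h1
  have h3 := mem_dott (t := schemeTransp t) h2
  rwa [S.sg_transp_sg N ht x0] at h3

lemma dott_dott_transp (N : S.Nice) {t : Set (X × X)} (ht : t ∈ S.thinRadical)
    (s : Set (X × X)) : dott (dott s t) (schemeTransp t) = s := by
  rw [S.dott_assoc N ht (S.thin_transp N ht), S.dott_transp_self N ht, S.dott_diag N]

lemma dott_cancel (N : S.Nice) {s s' t : Set (X × X)} (ht : t ∈ S.thinRadical)
    (h : dott s t = dott s' t) : s = s' := by
  have := congrArg (fun r => dott r (schemeTransp t)) h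
  simpa only [S.dott_dott_transp N ht] using this

lemma Rr_dott (N : S.Nice) {t : Set (X × X)} (ht : t ∈ S.thinRadical) (x y : X) :
    S.Rr x (sg t y) = dott (S.Rr x y) t :=
  (S.eq_Rr (S.dott_rels N (S.Rr_mem x y) ht) (mem_dott (S.mem_Rr x y))).symm

lemma Rr_sg_left (N : S.Nice) {t : Set (X × X)} (ht : t ∈ S.thinRadical) (x y : X) :
    S.Rr (sg t x) y = dott (S.Rr x y) (schemeTransp t) := by
  have h1 : (sg t x, sg t y) ∈ S.Rr x y := S.faithful_sg N ht x y _ (S.Rr_mem x y) (S.mem_Rr x y)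
  have h2 := mem_dott (t := schemeTransp t) h1
  rw [S.sg_transp_sg N ht y] at h2
  exact (S.eq_Rr (S.dott_rels N (S.Rr_mem x y) (S.thin_transp N ht)) h2).symm

/-- the setoid whose classes are the `O_θ(S)`-orbits. -/
def csd (N : S.Nice) : Setoid X where
  r x y := S.Rr x y ∈ S.thinRadical
  iseqv := by
    refine ⟨fun x => ?_, fun {x y} h => ?_, fun {x y z} hxy hyz => ?_⟩
    · rw [S.Rr_diag]; exact S.diag_thin N.ne
    · rw [S.Rr_transp]; exact S.thin_transp N h
    · have hcp : S.Rr x z ∈ S.cprod (S.Rr x y) (S.Rr y z) :=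
        S.mem_cprod_of (S.Rr_mem x y) (S.Rr_mem y z) (S.Rr_mem x z)
          (S.mem_Rr x z) (S.mem_Rr x y) (S.mem_Rr y z)
      rw [S.cprod_dott N (S.Rr_mem x y) hyz] at hcp
      rw [Set.mem_singleton_iff.mp hcp]
      exact S.dott_thin N hxy hyz

/-- the set of classes. -/
def Qt (N : S.Nice) := Quotient (S.csd N)

instance (N : S.Nice) : Finite (S.Qt N) := Quotient.finite _

/-- class of a point. -/
def qm (N : S.Nice) (x : X) : S.Qt N := Quotient.mk (S.csd N) x

lemma qm_surj (N : S.Nice) (q : S.Qt N) : ∃ x, S.qm N x = q := by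
  obtain ⟨x, rfl⟩ := Quotient.exists_rep q
  exact ⟨x, rfl⟩

lemma qm_eq_iff (N : S.Nice) {x y : X} :
    S.qm N x = S.qm N y ↔ S.Rr x y ∈ S.thinRadical := by
  constructor
  · intro h; exact Quotient.exact h
  · intro h; exact Quotient.sound h

lemma dott_diag_left (N : S.Nice) {t : Set (X × X)} (ht : t ∈ S.thinRadical) :
    dott (schemeDiag X) t = t := by
  ext ⟨x, y⟩
  simp only [dott, mem_setOf_eq, mem_diag]
  constructor
  · rintro ⟨z, rfl, rfl⟩
    exact S.sg_thin ht x
  · intro h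
    exact ⟨x, rfl, (S.mem_thin_iff ht).mp h⟩

lemma qm_sg (N : S.Nice) {t : Set (X × X)} (ht : t ∈ S.thinRadical) (x : X) :
    S.qm N (sg t x) = S.qm N x := by
  rw [qm_eq_iff, S.Rr_sg_left N ht, S.Rr_diag, S.dott_diag_left N (S.thin_transp N ht)]
  exact S.thin_transp N ht

lemma sg_of_qm_eq (N : S.Nice) {x y : X} (h : S.qm N x = S.qm N y) :
    S.Rr x y ∈ S.thinRadical ∧ y = sg (S.Rr x y) x := by
  have ht := (S.qm_eq_iff N).mp h
  exact ⟨ht, (S.mem_thin_iff ht).mp (S.mem_Rr x y)⟩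

lemma fiber_card (N : S.Nice) (q : S.Qt N) :
    Nat.card {y : X | S.qm N y = q} = Nat.card S.thinRadical := by
  obtain ⟨x, rfl⟩ := S.qm_surj N q
  refine (Nat.card_congr (Equiv.ofBijective
    (fun t : S.thinRadical => (⟨sg t.1 x, S.qm_sg N t.2 x⟩ : {y : X | S.qm N y = S.qm N x}))
    ⟨?_, ?_⟩)).symm
  · rintro ⟨t, ht⟩ ⟨t', ht'⟩ h
    simp only [Subtype.mk.injEq] at h
    exact Subtype.ext (S.rel_eq ht.1 ht'.1 (S.sg_thin ht x) (h ▸ S.sg_thin ht' x))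
  · rintro ⟨y, hy⟩
    obtain ⟨ht, hy2⟩ := S.sg_of_qm_eq N (hy.symm : S.qm N x = S.qm N y)
    exact ⟨⟨S.Rr x y, ht⟩, by simp only [Subtype.mk.injEq]; exact hy2.symm⟩

lemma card_eq_classes (N : S.Nice) :
    Fintype.card X = Nat.card (S.Qt N) * Nat.card S.thinRadical := by
  letI : Fintype (S.Qt N) := Fintype.ofFinite _
  rw [card_fiber_sum (fun x : X => S.qm N x)]
  rw [Finset.sum_congr rfl fun b _ => S.fiber_card N b, Finset.sum_const,
    Finset.card_univ, smul_eq_mul]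
  simp [Nat.card_eq_fintype_card]

/-- the stabilizer of a relation inside the thin radical. -/
def Kst (s : Set (X × X)) : Set (Set (X × X)) :=
  {t | t ∈ S.thinRadical ∧ dott s t = s}

lemma diag_mem_Kst (N : S.Nice) (s : Set (X × X)) : schemeDiag X ∈ S.Kst s :=
  ⟨S.diag_thin N.ne, S.dott_diag N s⟩

lemma Kst_dott (N : S.Nice) {s : Set (X × X)} {t1 t2 : Set (X × X)}
    (h1 : t1 ∈ S.Kst s) (h2 : t2 ∈ S.Kst s) : dott t1 t2 ∈ S.Kst s := by
  refine ⟨S.dott_thin N h1.1 h2.1, ?_⟩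
  rw [← S.dott_assoc N h1.1 h2.1, h1.2, h2.2]

lemma Kst_transp (N : S.Nice) {s : Set (X × X)} {t : Set (X × X)}
    (h : t ∈ S.Kst s) : schemeTransp t ∈ S.Kst s := by
  refine ⟨S.thin_transp N h.1, ?_⟩
  conv_lhs => rw [← h.2]
  exact S.dott_dott_transp N h.1 s

lemma row_class_card (N : S.Nice) {s : Set (X × X)} (hs : s ∈ S.rels)
    {x y : X} (hy : (x, y) ∈ s) (q : S.Qt N) (hq : S.qm N y = q) :
    Nat.card {a : {y' : X // (x, y') ∈ s} | S.qm N a.1 = q} = Nat.card (S.Kst s) := by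
  subst hq
  refine (Nat.card_congr (Equiv.ofBijective
    (fun t : S.Kst s =>
      (⟨⟨sg t.1 y, by
        have h1 : (x, sg t.1 y) ∈ dott s t.1 := mem_dott hy
        rwa [t.2.2] at h1⟩, S.qm_sg N t.2.1 y⟩ :
        {a : {y' : X // (x, y') ∈ s} | S.qm N a.1 = S.qm N y}))
    ⟨?_, ?_⟩)).symm
  · rintro ⟨t, ht⟩ ⟨t', ht'⟩ h
    simp only [Subtype.mk.injEq] at h
    exact Subtype.ext (S.rel_eq ht.1.1 ht'.1.1 (S.sg_thin ht.1 y) (h ▸ S.sg_thin ht'.1 y))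
  · rintro ⟨⟨y', hy'⟩, hq⟩
    simp only [mem_setOf_eq] at hq
    obtain ⟨ht, hy2⟩ := S.sg_of_qm_eq N (hq.symm : S.qm N y = S.qm N y')
    refine ⟨⟨S.Rr y y', ⟨ht, ?_⟩⟩, ?_⟩
    · have h1 : (x, sg (S.Rr y y') y) ∈ dott s (S.Rr y y') := mem_dott hy
      rw [← hy2] at h1
      exact S.rel_eq (S.dott_rels N hs ht) hs h1 hy' 
    · simp only [Subtype.mk.injEq]
      exact hy2.symm

/-- full hypothesis bundle. -/
structure Hyp (S : AssocScheme X) (p : ℕ) : Prop where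
  toNice : S.Nice
  prime : p.Prime
  pow : ∀ r ∈ S.rels, ∃ i, S.val r = p ^ i
  cardQ : Nat.card (S.Qt toNice) = p

lemma Kst_card_ne (N : S.Nice) (s : Set (X × X)) : Nat.card (S.Kst s) ≠ 0 :=
  Nat.card_ne_zero.mpr ⟨⟨_, S.diag_mem_Kst N s⟩, Set.toFinite _⟩

lemma thin_of_qm_fix (N : S.Nice) {s : Set (X × X)} (hs : s ∈ S.rels) {x y : X}
    (hy : (x, y) ∈ s) (h : S.qm N y = S.qm N x) : s ∈ S.thinRadical := by
  have ht := (S.qm_eq_iff N).mp h.symm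
  rwa [← S.eq_Rr hs hy] at ht

lemma row_single_class {p : ℕ} (H : S.Hyp p) {s : Set (X × X)} (hs : s ∈ S.rels)
    {x y y' : X} (hy : (x, y) ∈ s) (hy' : (x, y') ∈ s) :
    S.qm H.toNice y = S.qm H.toNice y' := by
  classical
  set N := H.toNice with hN
  letI : Fintype (S.Qt N) := Fintype.ofFinite _
  set g : {y' : X // (x, y') ∈ s} → S.Qt N := fun a => S.qm N a.1 with hg
  set k := Nat.card (S.Kst s) with hk
  have hfib : ∀ q : S.Qt N, ∀ z : X, (x, z) ∈ s → S.qm N z = q →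
      Nat.card {a : {y' : X // (x, y') ∈ s} | g a = q} = k :=
    fun q z hz hzq => S.row_class_card N hs hz q hzq
  have hcard := card_fiber_sum g
  have hRval : Fintype.card {y' : X // (x, y') ∈ s} = S.val s := by
    rw [← Nat.card_eq_fintype_card]
    exact S.row_card hs x
  set met := Finset.univ.filter
    (fun q : S.Qt N => Nat.card {a : {y' : X // (x, y') ∈ s} | g a = q} ≠ 0) with hmet
  have hterm : ∀ q ∈ met, Nat.card {a : {y' : X // (x, y') ∈ s} | g a = q} = k := by
    intro q hq
    have hne := (Finset.mem_filter.mp hq).2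
    obtain ⟨⟨a, ha⟩, -⟩ := Nat.card_ne_zero.mp hne
    exact hfib q a.1 a.2 ha
  have hEq : S.val s = met.card * k := by
    rw [← hRval, hcard, ← Finset.sum_filter_ne_zero Finset.univ, ← hmet,
      Finset.sum_congr rfl hterm, Finset.sum_const, smul_eq_mul]
  have hky : S.qm N y ∈ met := by
    rw [hmet, Finset.mem_filter]
    exact ⟨Finset.mem_univ _, by rw [hfib _ y hy rfl]; exact hk ▸ S.Kst_card_ne N s⟩
  have hky' : S.qm N y' ∈ met := by
    rw [hmet, Finset.mem_filter]
    exact ⟨Finset.mem_univ _, by rw [hfib _ y' hy' rfl]; exact hk ▸ S.Kst_card_ne N s⟩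
  obtain ⟨i, hi⟩ := H.pow s hs
  have hdvd : met.card ∣ p ^ i := hi ▸ ⟨k, hEq⟩
  obtain ⟨j, hji, hjm⟩ := (Nat.dvd_prime_pow H.prime).mp hdvd
  rcases Nat.eq_zero_or_pos j with hj0 | hjpos
  · have hm1 : met.card = 1 := by rw [hjm, hj0, pow_zero]
    exact Finset.card_le_one.mp (le_of_eq hm1) _ hky _ hky'
  · exfalso
    have hmp : met.card = p := by
      have h1 : p ≤ met.card := by
        rw [hjm]
        calc p = p ^ 1 := (pow_one p).symm
        _ ≤ p ^ j := Nat.pow_le_pow_right H.prime.pos hjpos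
      have h2 : met.card ≤ p := by
        calc met.card ≤ Finset.univ.card := Finset.card_le_univ met
        _ = Fintype.card (S.Qt N) := Finset.card_univ
        _ = p := by rw [← Nat.card_eq_fintype_card]; exact H.cardQ
      omega
    have huniv : met = Finset.univ := Finset.eq_univ_of_card met (by
      rw [hmp, ← Nat.card_eq_fintype_card]; exact H.cardQ.symm)
    have hx : S.qm N x ∈ met := huniv ▸ Finset.mem_univ _
    have hne := (Finset.mem_filter.mp hx).2
    obtain ⟨⟨a, ha⟩, -⟩ := Nat.card_ne_zero.mp hne
    have hthin := S.thin_of_qm_fix N hs a.2 ha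
    have : S.val s = 1 := hthin.2
    rw [this] at hEq
    have hk0 : k ≠ 0 := hk ▸ S.Kst_card_ne N s
    have hp2 : 2 ≤ p := H.prime.two_le
    nlinarith [Nat.one_le_iff_ne_zero.mpr hk0, hEq, hmp]

lemma mem_row_iff_orbit {p : ℕ} (H : S.Hyp p) {s : Set (X × X)} (hs : s ∈ S.rels)
    {x y : X} (hy : (x, y) ∈ s) (y' : X) :
    (x, y') ∈ s ↔ ∃ t ∈ S.Kst s, y' = sg t y := by
  set N := H.toNice
  constructor
  · intro h
    have hq := S.row_single_class H hs hy h
    obtain ⟨ht, he⟩ := S.sg_of_qm_eq N hq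
    refine ⟨S.Rr y y', ⟨ht, ?_⟩, he⟩
    have h1 : (x, sg (S.Rr y y') y) ∈ dott s (S.Rr y y') := mem_dott hy
    rw [← he] at h1
    exact S.rel_eq (S.dott_rels N hs ht) hs h1 h
  · rintro ⟨t, htK, rfl⟩
    have h1 : (x, sg t y) ∈ dott s t := mem_dott hy
    rwa [htK.2] at h1

/-- the induced map on classes. -/
noncomputable def dl {p : ℕ} (H : S.Hyp p) {s : Set (X × X)} (hs : s ∈ S.rels) :
    S.Qt H.toNice → S.Qt H.toNice :=
  Quotient.lift (fun x => S.qm H.toNice (sg s x)) (by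
    intro x x' hxx'
    set N := H.toNice
    have ht : S.Rr x x' ∈ S.thinRadical := hxx'
    have hx' : x' = sg (S.Rr x x') x := (S.mem_thin_iff ht).mp (S.mem_Rr x x')
    have h1 : (x, sg s x) ∈ s := S.sg_spec hs (N.good s hs) x
    have h2 : (sg (S.Rr x x') x, sg (S.Rr x x') (sg s x)) ∈ s :=
      S.faithful_sg N ht _ _ s hs h1
    rw [← hx'] at h2
    have h3 : (x', sg s x') ∈ s := S.sg_spec hs (N.good s hs) x'
    have h4 := S.row_single_class H hs h2 h3
    rw [S.qm_sg N ht (sg s x)] at h4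
    exact h4)

lemma dl_qm {p : ℕ} (H : S.Hyp p) {s : Set (X × X)} (hs : s ∈ S.rels) (x : X) :
    S.dl H hs (S.qm H.toNice x) = S.qm H.toNice (sg s x) := rfl

lemma dl_spec {p : ℕ} (H : S.Hyp p) {s : Set (X × X)} (hs : s ∈ S.rels) {x y : X}
    (hxy : (x, y) ∈ s) : S.dl H hs (S.qm H.toNice x) = S.qm H.toNice y := by
  rw [S.dl_qm H hs x]
  exact S.row_single_class H hs (S.sg_spec hs (H.toNice.good s hs) x) hxy

lemma dl_comp {p : ℕ} (H : S.Hyp p) {s s' u : Set (X × X)} (hs : s ∈ S.rels)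
    (hs' : s' ∈ S.rels) (hu : u ∈ S.rels) (hcp : u ∈ S.cprod s s') :
    S.dl H hu = S.dl H hs' ∘ S.dl H hs := by
  set N := H.toNice
  funext q
  obtain ⟨x, rfl⟩ := S.qm_surj N q
  have hxu : (x, sg u x) ∈ u := S.sg_spec hu (N.good u hu) x
  obtain ⟨z, h1, h2⟩ := S.exists_of_cprod hs hs' hcp hxu
  simp only [Function.comp_apply]
  rw [S.dl_spec H hs h1, S.dl_spec H hs' h2, S.dl_spec H hu hxu]

lemma dl_thin {p : ℕ} (H : S.Hyp p) {t : Set (X × X)} (ht : t ∈ S.thinRadical) :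
    S.dl H ht.1 = id := by
  funext q
  obtain ⟨x, rfl⟩ := S.qm_surj H.toNice q
  rw [S.dl_qm H ht.1 x]
  have : sg t x = sg t x := rfl
  exact S.qm_sg H.toNice ht x

lemma thin_of_dl_fix {p : ℕ} (H : S.Hyp p) {s : Set (X × X)} (hs : s ∈ S.rels)
    {q : S.Qt H.toNice} (h : S.dl H hs q = q) : s ∈ S.thinRadical := by
  obtain ⟨x, rfl⟩ := S.qm_surj H.toNice q
  rw [S.dl_qm H hs x] at h
  exact S.thin_of_qm_fix H.toNice hs (S.sg_spec hs (H.toNice.good s hs) x) h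

lemma cprod_ne (N : S.Nice) {s s' : Set (X × X)} (hs : s ∈ S.rels) (hs' : s' ∈ S.rels) :
    ∃ u ∈ S.rels, u ∈ S.cprod s s' := by
  haveI := N.ne
  set x0 := Classical.arbitrary X
  set z := sg s x0 with hz
  set y := sg s' z with hy
  refine ⟨S.Rr x0 y, S.Rr_mem x0 y, S.mem_cprod_of hs hs' (S.Rr_mem x0 y) (S.mem_Rr x0 y)
    (S.sg_spec hs (N.good s hs) x0) (S.sg_spec hs' (N.good s' hs') z)⟩

lemma dl_commute {p : ℕ} (H : S.Hyp p) {s s' : Set (X × X)} (hs : s ∈ S.rels)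
    (hs' : s' ∈ S.rels) : S.dl H hs ∘ S.dl H hs' = S.dl H hs' ∘ S.dl H hs := by
  obtain ⟨u, hu, hcp⟩ := S.cprod_ne H.toNice hs' hs
  have h1 := S.dl_comp H hs' hs hu hcp
  rw [S.cprod_comm H.toNice hs' hs] at hcp
  have h2 := S.dl_comp H hs hs' hu hcp
  rw [← h1, ← h2]

lemma dl_transp_comp {p : ℕ} (H : S.Hyp p) {s : Set (X × X)} (hs : s ∈ S.rels) :
    S.dl H (S.transpose_mem s hs) ∘ S.dl H hs = id := by
  haveI := H.toNice.ne
  set x0 := Classical.arbitrary X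
  have hd : schemeDiag X ∈ S.cprod s (schemeTransp s) := by
    refine S.mem_cprod_of hs (S.transpose_mem s hs) S.diag_mem
      (show (x0, x0) ∈ schemeDiag X from rfl)
      (S.sg_spec hs (H.toNice.good s hs) x0) ?_
    simpa using S.sg_spec hs (H.toNice.good s hs) x0
  have h1 := S.dl_comp H hs (S.transpose_mem s hs) S.diag_mem hd
  rw [← h1]
  exact S.dl_thin H (S.diag_thin H.toNice.ne)

lemma dl_inj {p : ℕ} (H : S.Hyp p) {s : Set (X × X)} (hs : s ∈ S.rels) :
    Function.Injective (S.dl H hs) := by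
  intro q q' h
  have := congrArg (S.dl H (S.transpose_mem s hs)) h
  have h2 := congrFun (S.dl_transp_comp H hs) q
  have h3 := congrFun (S.dl_transp_comp H hs) q'
  simp only [Function.comp_apply, id_eq] at h2 h3
  rw [this] at h2
  rw [h2] at h3
  exact h3

lemma dl_iter_exists {p : ℕ} (H : S.Hyp p) {s0 : Set (X × X)} (hs0 : s0 ∈ S.rels) :
    ∀ j : ℕ, ∃ u, ∃ hu : u ∈ S.rels, S.dl H hu = (S.dl H hs0)^[j] := by
  intro j
  induction j with
  | zero =>
    exact ⟨schemeDiag X, S.diag_mem, by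
      rw [Function.iterate_zero]
      exact S.dl_thin H (S.diag_thin H.toNice.ne)⟩
  | succ j ih =>
    obtain ⟨u, hu, hdl⟩ := ih
    obtain ⟨w, hw, hcp⟩ := S.cprod_ne H.toNice hu hs0
    refine ⟨w, hw, ?_⟩
    rw [S.dl_comp H hu hs0 hw hcp, hdl, Function.iterate_succ']

lemma iter_fix_id {p : ℕ} (H : S.Hyp p) {s0 : Set (X × X)} (hs0 : s0 ∈ S.rels)
    (j : ℕ) {q : S.Qt H.toNice} (h : (S.dl H hs0)^[j] q = q) :
    (S.dl H hs0)^[j] = id := by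
  obtain ⟨u, hu, hdl⟩ := S.dl_iter_exists H hs0 j
  rw [← hdl] at h ⊢
  have ht : u ∈ S.thinRadical := S.thin_of_dl_fix H hu h
  exact S.dl_thin H ht

lemma dl_cycle {p : ℕ} (H : S.Hyp p) {s0 : Set (X × X)} (hs0 : s0 ∈ S.rels)
    (hnt : s0 ∉ S.thinRadical) :
    (∀ q q' : S.Qt H.toNice, ∃ j, (S.dl H hs0)^[j] q = q') ∧
    (∀ j, (S.dl H hs0)^[j] = id → p ∣ j) ∧ (S.dl H hs0)^[p] = id := by
  classical
  set N := H.toNice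
  set δ := S.dl H hs0 with hδ
  haveI := N.ne
  set q0 : S.Qt N := S.qm N (Classical.arbitrary X) with hq0
  have hper : ∃ j, 0 < j ∧ δ^[j] q0 = q0 := by
    obtain ⟨a, b, hab, he⟩ := Finite.exists_ne_map_eq_of_infinite (fun j : ℕ => δ^[j] q0)
    rcases Nat.lt_or_ge a b with hlt | hge
    · refine ⟨b - a, by omega, ?_⟩
      have h4 : δ^[a] (δ^[b-a] q0) = δ^[a] q0 := by
        rw [← Function.iterate_add_apply]
        have h5 : a + (b - a) = b := by omega
        rw [h5, he]
      exact (S.dl_inj H hs0).iterate a h4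
    · have hlt : b < a := by omega
      refine ⟨a - b, by omega, ?_⟩
      have h4 : δ^[b] (δ^[a-b] q0) = δ^[b] q0 := by
        rw [← Function.iterate_add_apply]
        have h5 : b + (a - b) = a := by omega
        rw [h5, ← he]
      exact (S.dl_inj H hs0).iterate b h4
  obtain ⟨l, hlpos, hlfix, hmin0⟩ :
      ∃ l, 0 < l ∧ δ^[l] q0 = q0 ∧ ∀ j, j < l → ¬(0 < j ∧ δ^[j] q0 = q0) :=
    ⟨Nat.find hper, (Nat.find_spec hper).1, (Nat.find_spec hper).2,
      fun j hj => Nat.find_min hper hj⟩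
  have hlid : δ^[l] = id := S.iter_fix_id H hs0 l hlfix
  have hmin : ∀ j, 0 < j → j < l → δ^[j] ≠ id := by
    intro j hj0 hjl hid
    exact hmin0 j hjl ⟨hj0, by rw [hid]; rfl⟩
  have hperiod : ∀ j, δ^[j] = id → l ∣ j := by
    intro j hid
    have hsplit : j = l * (j / l) + j % l := (Nat.div_add_mod j l).symm
    have hml : δ^[l * (j / l)] = id := by
      rw [Function.iterate_mul, hlid]
      exact Function.iterate_id _
    have hmod : δ^[j % l] = id := by
      funext q
      have h6 := congrFun hid q
      rw [hsplit, Function.iterate_add_apply, hml] at h6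
      simpa using h6
    rcases Nat.eq_zero_or_pos (j % l) with h0 | hpos
    · exact Nat.dvd_of_mod_eq_zero h0
    · exact absurd hmod (hmin _ hpos (Nat.mod_lt _ hlpos))
  set sd : Setoid (S.Qt N) := ⟨fun q q' => ∃ j, δ^[j] q = q', by
    refine ⟨fun q => ⟨0, rfl⟩, ?_, ?_⟩
    · rintro q q' ⟨j, rfl⟩
      refine ⟨j * (l - 1), ?_⟩
      rw [← Function.iterate_add_apply]
      have h2 : j * (l - 1) + j = l * j := by
        rw [mul_comm j (l - 1), Nat.sub_one_mul]
        have h3 : j ≤ l * j := Nat.le_mul_of_pos_left j hlpos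
        omega
      rw [h2, Function.iterate_mul, hlid, Function.iterate_id]
      rfl
    · rintro q q' q'' ⟨j, rfl⟩ ⟨j', rfl⟩
      exact ⟨j' + j, (Function.iterate_add_apply _ _ _ _)⟩⟩ with hsd
  have horb : ∀ q : S.Qt N, Nat.card {q' : S.Qt N | sd.r q q'} = l := by
    intro q
    have he : Nat.card (Fin l) = Nat.card {q' : S.Qt N | sd.r q q'} := by
      refine Nat.card_congr (Equiv.ofBijective
        (fun j : Fin l => (⟨δ^[j.1] q, ⟨j.1, rfl⟩⟩ : {q' : S.Qt N | sd.r q q'})) ⟨?_, ?_⟩)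
      · intro i j hij
        simp only [Subtype.mk.injEq] at hij
        by_contra hne
        have hne' : i.1 ≠ j.1 := fun h => hne (Fin.ext h)
        rcases Nat.lt_or_ge i.1 j.1 with hlt | hge
        · have h4 : δ^[i.1] (δ^[j.1 - i.1] q) = δ^[i.1] q := by
            rw [← Function.iterate_add_apply]
            have h5 : i.1 + (j.1 - i.1) = j.1 := by omega
            rw [h5, ← hij]
          have hfix := (S.dl_inj H hs0).iterate i.1 h4
          have h6 := hperiod _ (S.iter_fix_id H hs0 _ hfix)
          have hj := j.2
          rcases h6 with ⟨c, hc⟩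
          rcases Nat.eq_zero_or_pos c with rfl | hcpos
          · omega
          · have : l ≤ l * c := Nat.le_mul_of_pos_right l hcpos
            omega
        · have hlt : j.1 < i.1 := by omega
          have h4 : δ^[j.1] (δ^[i.1 - j.1] q) = δ^[j.1] q := by
            rw [← Function.iterate_add_apply]
            have h5 : j.1 + (i.1 - j.1) = i.1 := by omega
            rw [h5, hij]
          have hfix := (S.dl_inj H hs0).iterate j.1 h4
          have h6 := hperiod _ (S.iter_fix_id H hs0 _ hfix)
          have hi := i.2
          rcases h6 with ⟨c, hc⟩
          rcases Nat.eq_zero_or_pos c with rfl | hcpos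
          · omega
          · have : l ≤ l * c := Nat.le_mul_of_pos_right l hcpos
            omega
      · rintro ⟨q', j, rfl⟩
        refine ⟨⟨j % l, Nat.mod_lt _ hlpos⟩, ?_⟩
        simp only [Subtype.mk.injEq]
        conv_rhs => rw [(Nat.div_add_mod j l).symm]
        rw [Function.iterate_add_apply, Function.iterate_mul, hlid, Function.iterate_id]
        simp
    rw [← he]
    simp
  letI : Fintype (S.Qt N) := Fintype.ofFinite _
  letI : Fintype (Quotient sd) := Fintype.ofFinite _
  have hcount := card_fiber_sum (fun q : S.Qt N => Quotient.mk sd q)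
  have hfib : ∀ c : Quotient sd, Nat.card {q : S.Qt N | Quotient.mk sd q = c} = l := by
    intro c
    obtain ⟨q, rfl⟩ := Quotient.exists_rep c
    rw [← horb q]
    refine Nat.card_congr (Equiv.subtypeEquiv (Equiv.refl _) fun q' => ?_)
    simp only [Equiv.refl_apply, mem_setOf_eq]
    constructor
    · intro h
      exact sd.symm (Quotient.exact h)
    · intro h
      exact Quotient.sound (sd.symm h)
  rw [Finset.sum_congr rfl (fun c _ => hfib c), Finset.sum_const, Finset.card_univ,
    smul_eq_mul] at hcount
  have hp : p = Fintype.card (Quotient sd) * l := by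
    rw [← hcount, ← Nat.card_eq_fintype_card]
    exact H.cardQ.symm
  have hldvd : l ∣ p := Dvd.intro_left _ hp.symm
  have hl1p : l = 1 ∨ l = p := (Nat.Prime.eq_one_or_self_of_dvd H.prime l hldvd)
  have hlp : l = p := by
    rcases hl1p with h1 | hp'
    · exfalso
      rw [h1] at hlfix
      simp only [Function.iterate_one] at hlfix
      exact hnt (S.thin_of_dl_fix H hs0 hlfix)
    · exact hp'
  have horbs1 : Fintype.card (Quotient sd) = 1 := by
    have hppos := H.prime.pos
    rw [hlp] at hp
    have h2 : Fintype.card (Quotient sd) * p = 1 * p := by omega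
    exact Nat.eq_of_mul_eq_mul_right hppos h2
  refine ⟨?_, ?_, ?_⟩
  · intro q q'
    have h7 : Quotient.mk sd q = Quotient.mk sd q' :=
      Fintype.card_le_one_iff.mp (le_of_eq horbs1) _ _
    exact Quotient.exact h7
  · intro j hid
    have := hperiod j hid
    rwa [hlp] at this
  · rw [← hlp]
    exact hlid

lemma torsor {p : ℕ} (H : S.Hyp p) {s s' : Set (X × X)} (hs : s ∈ S.rels)
    (hs' : s' ∈ S.rels) (h : S.dl H hs = S.dl H hs') :
    ∃ t ∈ S.thinRadical, s' = dott s t := by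
  set N := H.toNice
  haveI := N.ne
  set x0 := Classical.arbitrary X
  set y := sg s x0 with hy
  set y' := sg s' x0 with hy'
  have hq : S.qm N y = S.qm N y' := by
    rw [← S.dl_qm H hs x0, ← S.dl_qm H hs' x0, h]
  obtain ⟨ht, he⟩ := S.sg_of_qm_eq N hq
  refine ⟨S.Rr y y', ht, ?_⟩
  have h1 : (x0, sg (S.Rr y y') y) ∈ dott s (S.Rr y y') :=
    mem_dott (S.sg_spec hs (N.good s hs) x0)
  rw [← he] at h1
  exact S.rel_eq hs' (S.dott_rels N hs ht) (S.sg_spec hs' (N.good s' hs') x0) h1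

lemma Kst_dott_right (N : S.Nice) {s t : Set (X × X)} (ht : t ∈ S.thinRadical) :
    S.Kst (dott s t) = S.Kst s := by
  have hswap : ∀ k, k ∈ S.thinRadical → dott (dott s t) k = dott (dott s k) t := by
    intro k hk
    rw [S.dott_assoc N ht hk, S.dott_assoc N hk ht, S.dott_comm N ht hk]
  ext k
  constructor
  · rintro ⟨hk, h⟩
    refine ⟨hk, ?_⟩
    rw [hswap k hk] at h
    exact S.dott_cancel N ht h
  · rintro ⟨hk, h⟩
    refine ⟨hk, ?_⟩
    rw [hswap k hk, h]

lemma Kst_eq_of_dl_eq {p : ℕ} (H : S.Hyp p) {s s' : Set (X × X)} (hs : s ∈ S.rels)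
    (hs' : s' ∈ S.rels) (h : S.dl H hs = S.dl H hs') : S.Kst s = S.Kst s' := by
  obtain ⟨t, ht, rfl⟩ := S.torsor H hs hs' h
  exact (S.Kst_dott_right H.toNice ht).symm

/-- the join of two stabilizers. -/
def Kjn (s s' : Set (X × X)) : Set (Set (X × X)) :=
  {t | ∃ k ∈ S.Kst s, ∃ k' ∈ S.Kst s', t = dott k k'}

lemma Kjn_thin (N : S.Nice) {s s' t : Set (X × X)} (h : t ∈ S.Kjn s s') :
    t ∈ S.thinRadical := by
  obtain ⟨k, hk, k', hk', rfl⟩ := h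
  exact S.dott_thin N hk.1 hk'.1

lemma Kst_sub_Kjn_left (N : S.Nice) (s s' : Set (X × X)) : S.Kst s ⊆ S.Kjn s s' :=
  fun k hk => ⟨k, hk, schemeDiag X, S.diag_mem_Kst N s', (S.dott_diag N k).symm⟩

lemma Kst_sub_Kjn_right (N : S.Nice) (s s' : Set (X × X)) : S.Kst s' ⊆ S.Kjn s s' :=
  fun k hk => ⟨schemeDiag X, S.diag_mem_Kst N s, k, hk, (S.dott_diag_left N hk.1).symm⟩

lemma Kjn_self (N : S.Nice) (s : Set (X × X)) : S.Kjn s s = S.Kst s := by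
  ext t
  constructor
  · rintro ⟨k, hk, k', hk', rfl⟩
    exact S.Kst_dott N hk hk'
  · intro h
    exact S.Kst_sub_Kjn_left N s s h

lemma Kjn_mono (N : S.Nice) {s s' u u' : Set (X × X)} (h1 : S.Kst s ⊆ S.Kst u)
    (h2 : S.Kst s' ⊆ S.Kst u') : S.Kjn s s' ⊆ S.Kjn u u' := by
  rintro t ⟨k, hk, k', hk', rfl⟩
  exact ⟨k, h1 hk, k', h2 hk', rfl⟩

lemma Kjn_dott (N : S.Nice) {s s' t t' : Set (X × X)} (h : t ∈ S.Kjn s s')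
    (h' : t' ∈ S.Kjn s s') : dott t t' ∈ S.Kjn s s' := by
  obtain ⟨k1, hk1, k1', hk1', rfl⟩ := h
  obtain ⟨k2, hk2, k2', hk2', rfl⟩ := h'
  refine ⟨dott k1 k2, S.Kst_dott N hk1 hk2, dott k1' k2', S.Kst_dott N hk1' hk2', ?_⟩
  -- (k1 k1')(k2 k2') = (k1 k2)(k1' k2')
  refine S.thin_ext N
    (S.dott_thin N (S.dott_thin N hk1.1 hk1'.1) (S.dott_thin N hk2.1 hk2'.1))
    (S.dott_thin N (S.dott_thin N hk1.1 hk2.1) (S.dott_thin N hk1'.1 hk2'.1)) fun x => ?_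
  rw [S.sg_dott N (S.dott_thin N hk1.1 hk1'.1) (S.dott_thin N hk2.1 hk2'.1),
    S.sg_dott N (S.dott_thin N hk1.1 hk2.1) (S.dott_thin N hk1'.1 hk2'.1),
    S.sg_dott N hk1.1 hk1'.1, S.sg_dott N hk2.1 hk2'.1,
    S.sg_dott N hk1.1 hk2.1, S.sg_dott N hk1'.1 hk2'.1,
    S.sg_swap N hk1'.1 hk2.1]

lemma Kjn_transp (N : S.Nice) {s s' t : Set (X × X)} (h : t ∈ S.Kjn s s') :
    schemeTransp t ∈ S.Kjn s s' := by
  obtain ⟨k, hk, k', hk', rfl⟩ := h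
  refine ⟨schemeTransp k, S.Kst_transp N hk, schemeTransp k', S.Kst_transp N hk', ?_⟩
  exact S.dott_transp N hk.1.1 hk'.1

lemma comp_support {p : ℕ} (H : S.Hyp p) {s s' : Set (X × X)} (hs : s ∈ S.rels)
    (hs' : s' ∈ S.rels) (x : X) (y : X) :
    (∃ z, (x, z) ∈ s ∧ (z, y) ∈ s') ↔
      ∃ t ∈ S.Kjn s s', y = sg t (sg s' (sg s x)) := by
  set N := H.toNice
  set z0 := sg s x with hz0
  set w0 := sg s' z0 with hw0
  have hz0m : (x, z0) ∈ s := S.sg_spec hs (N.good s hs) x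
  have hw0m : (z0, w0) ∈ s' := S.sg_spec hs' (N.good s' hs') z0
  constructor
  · rintro ⟨z, h1, h2⟩
    obtain ⟨k, hk, rfl⟩ := (S.mem_row_iff_orbit H hs hz0m z).mp h1
    have h3 : (sg (schemeTransp k) (sg k z0), sg (schemeTransp k) y) ∈ s' :=
      S.faithful_sg N (S.thin_transp N hk.1) _ _ s' hs' h2
    rw [S.sg_transp_sg N hk.1 z0] at h3
    obtain ⟨k', hk', he⟩ := (S.mem_row_iff_orbit H hs' hw0m _).mp h3
    refine ⟨dott k' k, ⟨k, hk, k', hk', S.dott_comm N hk'.1 hk.1⟩, ?_⟩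
    rw [S.sg_dott N hk'.1 hk.1, ← he, S.sg_sg_transp N hk.1]
  · rintro ⟨t, ⟨k, hk, k', hk', rfl⟩, rfl⟩
    refine ⟨sg k z0, ?_, ?_⟩
    · exact (S.mem_row_iff_orbit H hs hz0m _).mpr ⟨k, hk, rfl⟩
    · have h4 : (sg k z0, sg k w0) ∈ s' := S.faithful_sg N hk.1 _ _ s' hs' hw0m
      have h5 : (sg k z0, sg k' (sg k w0)) ∈ dott s' k' := mem_dott h4
      rw [hk'.2] at h5
      rwa [S.sg_dott N hk.1 hk'.1]

lemma Kst_sub_Kjn_of_cprod {p : ℕ} (H : S.Hyp p) {s s' u : Set (X × X)}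
    (hs : s ∈ S.rels) (hs' : s' ∈ S.rels) (hcp : u ∈ S.cprod s s') :
    S.Kst u ⊆ S.Kjn s s' := by
  set N := H.toNice
  haveI := N.ne
  have hu : u ∈ S.rels := hcp.1
  set x := Classical.arbitrary X
  set y := sg u x with hy2
  have hxy : (x, y) ∈ u := S.sg_spec hu (N.good u hu) x
  obtain ⟨t0, ht0, he0⟩ := (S.comp_support H hs hs' x y).mp (S.exists_of_cprod hs hs' hcp hxy)
  intro k hk
  have hky : (x, sg k y) ∈ u := (S.mem_row_iff_orbit H hu hxy _).mpr ⟨k, hk, rfl⟩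
  obtain ⟨t1, ht1, he1⟩ := (S.comp_support H hs hs' x (sg k y)).mp
    (S.exists_of_cprod hs hs' hcp hky)
  -- sg k y = sg (dott t0 k) w0 = sg t1 w0, hence dott t0 k = t1, so k = dott t1 t0*
  set w0 := sg s' (sg s x)
  have hdk : dott t0 k ∈ S.thinRadical := S.dott_thin N (S.Kjn_thin N ht0) hk.1
  have h2 : sg (dott t0 k) w0 = sg t1 w0 := by
    rw [S.sg_dott N (S.Kjn_thin N ht0) hk.1, ← he0, ← he1]
  have h3 : dott t0 k = t1 :=
    S.rel_eq hdk.1 (S.Kjn_thin N ht1).1 (S.sg_thin hdk w0) (h2 ▸ S.sg_thin (S.Kjn_thin N ht1) w0)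
  have h4 : k = dott t1 (schemeTransp t0) := by
    rw [← h3, S.dott_comm N (S.Kjn_thin N ht0) hk.1]
    exact (S.dott_dott_transp N (S.Kjn_thin N ht0) k).symm
  rw [h4]
  exact S.Kjn_dott N ht1 (S.Kjn_transp N ht0)

lemma dl_eq_iter {p : ℕ} (H : S.Hyp p) {v s : Set (X × X)} (hv : v ∈ S.rels)
    (hnv : v ∉ S.thinRadical) (hs : s ∈ S.rels) :
    ∃ j, j < p ∧ S.dl H hs = (S.dl H hv)^[j] := by
  obtain ⟨htrans, hdvd, hpid⟩ := S.dl_cycle H hv hnv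
  set N := H.toNice
  haveI := N.ne
  set δ := S.dl H hv with hδ
  set q0 : S.Qt N := S.qm N (Classical.arbitrary X) with hq0
  obtain ⟨j, hj⟩ := htrans q0 (S.dl H hs q0)
  have hC : Function.Commute (S.dl H hs) δ := fun x => congrFun (S.dl_commute H hs hv) x
  have hfun : S.dl H hs = δ^[j] := by
    funext q
    obtain ⟨m, rfl⟩ := htrans q0 q
    calc S.dl H hs (δ^[m] q0) = δ^[m] (S.dl H hs q0) := (hC.iterate_right m) q0
    _ = δ^[m] (δ^[j] q0) := by rw [hj]
    _ = δ^[m + j] q0 := (Function.iterate_add_apply δ m j q0).symm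
    _ = δ^[j + m] q0 := by rw [Nat.add_comm]
    _ = δ^[j] (δ^[m] q0) := Function.iterate_add_apply δ j m q0
  have hppos : 0 < p := H.prime.pos
  refine ⟨j % p, Nat.mod_lt _ hppos, ?_⟩
  rw [hfun]
  conv_lhs => rw [(Nat.div_add_mod j p).symm]
  funext q
  rw [Function.iterate_add_apply, Function.iterate_mul, hpid, Function.iterate_id]
  simp

lemma Kst_le {p : ℕ} (H : S.Hyp p) {v : Set (X × X)} (hv : v ∈ S.rels)
    (hnv : v ∉ S.thinRadical) :
    ∀ j, 0 < j → j < p → ∀ u, ∀ hu : u ∈ S.rels,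
      S.dl H hu = (S.dl H hv)^[j] → S.Kst u ⊆ S.Kst v := by
  intro j
  induction j with
  | zero => omega
  | succ j ih =>
    intro h0 hjp u hu hdl
    rcases Nat.eq_zero_or_pos j with rfl | hjpos
    · have he : S.dl H hu = S.dl H hv := by rwa [Function.iterate_one] at hdl
      rw [S.Kst_eq_of_dl_eq H hu hv he]
    · obtain ⟨w, hw, hwd⟩ := S.dl_iter_exists H hv j
      have hwnt : w ∉ S.thinRadical := by
        intro hthin
        have h1 : (S.dl H hv)^[j] = id := by rw [← hwd]; exact S.dl_thin H hthin
        have h2 := (S.dl_cycle H hv hnv).2.1 j h1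
        have := Nat.le_of_dvd hjpos h2
        omega
      obtain ⟨w', hw', hcpw⟩ := S.cprod_ne H.toNice hw hv
      have hdlw' : S.dl H hu = S.dl H hw' := by
        rw [S.dl_comp H hw hv hw' hcpw, hwd, hdl, Function.iterate_succ']
      rw [S.Kst_eq_of_dl_eq H hu hw' hdlw']
      refine subset_trans (S.Kst_sub_Kjn_of_cprod H hw hv hcpw) ?_
      refine subset_trans (S.Kjn_mono H.toNice (ih hjpos (by omega) w hw hwd)
        (subset_refl _)) ?_
      exact le_of_eq (S.Kjn_self H.toNice v)

lemma Kst_le' {p : ℕ} (H : S.Hyp p) {v s : Set (X × X)} (hv : v ∈ S.rels)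
    (hnv : v ∉ S.thinRadical) (hs : s ∈ S.rels) (hns : s ∉ S.thinRadical) :
    S.Kst s ⊆ S.Kst v := by
  obtain ⟨j, hjp, hdl⟩ := S.dl_eq_iter H hv hnv hs
  rcases Nat.eq_zero_or_pos j with rfl | hjpos
  · exfalso
    rw [Function.iterate_zero] at hdl
    haveI := H.toNice.ne
    refine hns (S.thin_of_dl_fix H hs (q := S.qm H.toNice (Classical.arbitrary X)) ?_)
    rw [hdl]
    rfl
  · exact S.Kst_le H hv hnv j hjpos hjp s hs hdl

lemma Kst_eq_nonthin {p : ℕ} (H : S.Hyp p) {s v : Set (X × X)} (hs : s ∈ S.rels)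
    (hv : v ∈ S.rels) (hns : s ∉ S.thinRadical) (hnv : v ∉ S.thinRadical) :
    S.Kst s = S.Kst v :=
  subset_antisymm (S.Kst_le' H hv hnv hs hns) (S.Kst_le' H hs hns hv hnv)

lemma cprod_singleton {p : ℕ} (H : S.Hyp p) {u v : Set (X × X)} (hu : u ∈ S.rels)
    (hv : v ∈ S.rels) (hnu : u ∉ S.thinRadical) (hnv : v ∉ S.thinRadical)
    (hni : ∀ w ∈ S.cprod u v, w ∉ S.thinRadical) {w w' : Set (X × X)}
    (hw : w ∈ S.cprod u v) (hw' : w' ∈ S.cprod u v) : w = w' := by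
  set N := H.toNice
  haveI := N.ne
  set x := Classical.arbitrary X
  set w0 := sg v (sg u x) with hw0
  have hwr := hw.1
  have hwr' := hw'.1
  have hy : (x, sg w x) ∈ w := S.sg_spec hwr (N.good w hwr) x
  have hy' : (x, sg w' x) ∈ w' := S.sg_spec hwr' (N.good w' hwr') x
  obtain ⟨t, ht, he⟩ := (S.comp_support H hu hv x _).mp (S.exists_of_cprod hu hv hw hy)
  obtain ⟨t', ht', he'⟩ := (S.comp_support H hu hv x _).mp (S.exists_of_cprod hu hv hw' hy')
  have hwnt := hni w hw
  have hwnt' := hni w' hw'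
  have hKw : S.Kjn u v ⊆ S.Kst w := by
    have h1 : S.Kst u ⊆ S.Kst w := S.Kst_le' H hwr hwnt hu hnu
    have h2 : S.Kst v ⊆ S.Kst w := S.Kst_le' H hwr hwnt hv hnv
    refine subset_trans (S.Kjn_mono N h1 h2) ?_
    exact le_of_eq (S.Kjn_self N w)
  have htw : t ∈ S.Kst w := hKw ht
  have htw' : t' ∈ S.Kst w := by
    have h1 : S.Kjn u v ⊆ S.Kst w' := by
      have ha : S.Kst u ⊆ S.Kst w' := S.Kst_le' H hwr' hwnt' hu hnu
      have hb : S.Kst v ⊆ S.Kst w' := S.Kst_le' H hwr' hwnt' hv hnv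
      refine subset_trans (S.Kjn_mono N ha hb) ?_
      exact le_of_eq (S.Kjn_self N w')
    have h2 := h1 ht'
    rwa [S.Kst_eq_nonthin H hwr' hwr hwnt' hwnt] at h2
  have hstep : sg w' x = sg (dott (schemeTransp t) t') (sg w x) := by
    rw [S.sg_dott N (S.thin_transp N (S.Kjn_thin N ht)) (S.Kjn_thin N ht'), he,
      S.sg_transp_sg N (S.Kjn_thin N ht), ← he']
  have hmem : (x, sg w' x) ∈ w := (S.mem_row_iff_orbit H hwr hy _).mpr
    ⟨dott (schemeTransp t) t', S.Kst_dott N (S.Kst_transp N htw) htw', hstep⟩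
  exact S.rel_eq hwr hwr' hmem hy'

/-- basepoint of a class. -/
noncomputable def bp {p : ℕ} (H : S.Hyp p) (q : S.Qt H.toNice) : X :=
  @Classical.epsilon X H.toNice.ne fun x => S.qm H.toNice x = q

lemma bp_spec {p : ℕ} (H : S.Hyp p) (q : S.Qt H.toNice) : S.qm H.toNice (S.bp H q) = q :=
  Classical.epsilon_spec (p := fun x => S.qm H.toNice x = q) (S.qm_surj H.toNice q)

/-- base class. -/
noncomputable def qz {p : ℕ} (H : S.Hyp p) : S.Qt H.toNice :=
  S.qm H.toNice (@Classical.arbitrary X H.toNice.ne)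

/-- the thin relation moving the basepoint of the class of `x` to `x`. -/
noncomputable def th {p : ℕ} (H : S.Hyp p) (x : X) : Set (X × X) :=
  S.Rr (S.bp H (S.qm H.toNice x)) x

lemma th_thin {p : ℕ} (H : S.Hyp p) (x : X) : S.th H x ∈ S.thinRadical :=
  (S.qm_eq_iff H.toNice).mp (S.bp_spec H (S.qm H.toNice x))

lemma th_spec {p : ℕ} (H : S.Hyp p) (x : X) :
    sg (S.th H x) (S.bp H (S.qm H.toNice x)) = x :=
  ((S.mem_thin_iff (S.th_thin H x)).mp (S.mem_Rr _ _)).symm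

lemma dl_Rr_bp {p : ℕ} (H : S.Hyp p) (q q' : S.Qt H.toNice) :
    S.dl H (S.Rr_mem (S.bp H q) (S.bp H q')) q = q' := by
  have h1 := S.dl_spec H (S.Rr_mem (S.bp H q) (S.bp H q'))
    (S.mem_Rr (S.bp H q) (S.bp H q'))
  rw [S.bp_spec H q, S.bp_spec H q'] at h1
  exact h1

lemma B_nonthin {p : ℕ} (H : S.Hyp p) {q q' : S.Qt H.toNice} (h : q ≠ q') :
    S.Rr (S.bp H q) (S.bp H q') ∉ S.thinRadical := by
  intro hthin
  have h1 := S.dl_Rr_bp H q q'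
  have h2 : S.dl H (S.Rr_mem (S.bp H q) (S.bp H q')) = id := S.dl_thin H hthin
  rw [h2] at h1
  exact h (h1 ▸ rfl)

lemma dl_B_eq {p : ℕ} (H : S.Hyp p) {s0 : Set (X × X)} (hs0 : s0 ∈ S.rels)
    (hnt : s0 ∉ S.thinRadical) (q q' : S.Qt H.toNice) :
    S.dl H (S.Rr_mem (S.bp H (S.dl H hs0 q)) (S.bp H (S.dl H hs0 q'))) =
      S.dl H (S.Rr_mem (S.bp H q) (S.bp H q')) := by
  set δ := S.dl H hs0 with hδ
  set A := S.Rr (S.bp H (δ q)) (S.bp H (δ q')) with hA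
  set B := S.Rr (S.bp H q) (S.bp H q') with hB
  have hAq : S.dl H (S.Rr_mem (S.bp H (δ q)) (S.bp H (δ q'))) q = q' := by
    have h1 : S.dl H (S.Rr_mem (S.bp H (δ q)) (S.bp H (δ q'))) (δ q) = δ q' :=
      S.dl_Rr_bp H (δ q) (δ q')
    have h2 : Function.Commute (S.dl H (S.Rr_mem (S.bp H (δ q)) (S.bp H (δ q')))) δ :=
      fun x => congrFun (S.dl_commute H (S.Rr_mem _ _) hs0) x
    have h3 := h2 q
    rw [h1] at h3
    exact (S.dl_inj H hs0 h3).symm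
  funext qq
  obtain ⟨m, rfl⟩ := (S.dl_cycle H hs0 hnt).1 q qq
  have hCA : Function.Commute (S.dl H (S.Rr_mem (S.bp H (δ q)) (S.bp H (δ q')))) δ :=
    fun x => congrFun (S.dl_commute H (S.Rr_mem _ _) hs0) x
  have hCB : Function.Commute (S.dl H (S.Rr_mem (S.bp H q) (S.bp H q'))) δ :=
    fun x => congrFun (S.dl_commute H (S.Rr_mem _ _) hs0) x
  rw [(hCA.iterate_right m) q, (hCB.iterate_right m) q, hAq, S.dl_Rr_bp H q q']

/-- the difference coset. -/
def Dd {p : ℕ} (H : S.Hyp p) {s0 : Set (X × X)} (hs0 : s0 ∈ S.rels)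
    (q q' : S.Qt H.toNice) : Set (Set (X × X)) :=
  {t | t ∈ S.thinRadical ∧
    dott (S.Rr (S.bp H (S.dl H hs0 q)) (S.bp H (S.dl H hs0 q'))) t =
      S.Rr (S.bp H q) (S.bp H q')}

lemma Dd_nonempty {p : ℕ} (H : S.Hyp p) {s0 : Set (X × X)} (hs0 : s0 ∈ S.rels)
    (hnt : s0 ∉ S.thinRadical) (q q' : S.Qt H.toNice) :
    ∃ t, t ∈ S.Dd H hs0 q q' := by
  obtain ⟨t, ht, he⟩ := S.torsor H (S.Rr_mem (S.bp H (S.dl H hs0 q)) (S.bp H (S.dl H hs0 q')))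
    (S.Rr_mem (S.bp H q) (S.bp H q')) (S.dl_B_eq H hs0 hnt q q')
  exact ⟨t, ht, he.symm⟩

lemma Dd_transp {p : ℕ} (H : S.Hyp p) {s0 : Set (X × X)} (hs0 : s0 ∈ S.rels)
    {q q' : S.Qt H.toNice} {t : Set (X × X)} (h : t ∈ S.Dd H hs0 q q') :
    schemeTransp t ∈ S.Dd H hs0 q' q := by
  obtain ⟨ht, he⟩ := h
  refine ⟨S.thin_transp H.toNice ht, ?_⟩
  rw [S.Rr_transp (S.bp H (S.dl H hs0 q)) (S.bp H (S.dl H hs0 q')),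
    ← S.dott_transp H.toNice (S.Rr_mem _ _) ht, he]
  exact (S.Rr_transp _ _).symm

lemma Dd_comp {p : ℕ} (H : S.Hyp p) {s0 : Set (X × X)} (hs0 : s0 ∈ S.rels)
    (hnt : s0 ∉ S.thinRadical) {q q' q'' : S.Qt H.toNice}
    (h1 : q ≠ q') (h2 : q' ≠ q'') (h3 : q ≠ q'')
    {t t' : Set (X × X)} (ht : t ∈ S.Dd H hs0 q q') (ht' : t' ∈ S.Dd H hs0 q' q'') :
    dott t' t ∈ S.Dd H hs0 q q'' := by
  have hU : S.Rr (S.bp H (S.dl H hs0 q)) (S.bp H (S.dl H hs0 q'')) ∈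
      S.cprod (S.Rr (S.bp H (S.dl H hs0 q)) (S.bp H (S.dl H hs0 q')))
        (S.Rr (S.bp H (S.dl H hs0 q')) (S.bp H (S.dl H hs0 q''))) :=
    S.mem_cprod_of (S.Rr_mem _ _) (S.Rr_mem _ _) (S.Rr_mem _ _)
      (S.mem_Rr _ _) (S.mem_Rr _ _) (S.mem_Rr _ _)
  have hp1 : (S.bp H (S.dl H hs0 q), sg t (S.bp H (S.dl H hs0 q'))) ∈
      S.Rr (S.bp H q) (S.bp H q') := by
    rw [← ht.2]
    exact mem_dott (S.mem_Rr _ _)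
  have hp2 : (sg t (S.bp H (S.dl H hs0 q')), sg t (sg t' (S.bp H (S.dl H hs0 q'')))) ∈
      S.Rr (S.bp H q') (S.bp H q'') := by
    have hm : (S.bp H (S.dl H hs0 q'), sg t' (S.bp H (S.dl H hs0 q''))) ∈
        S.Rr (S.bp H q') (S.bp H q'') := by
      rw [← ht'.2]
      exact mem_dott (S.mem_Rr _ _)
    exact S.faithful_sg H.toNice ht.1 _ _ _ (S.Rr_mem _ _) hm
  have hW : S.Rr (S.bp H (S.dl H hs0 q)) (sg t (sg t' (S.bp H (S.dl H hs0 q'')))) ∈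
      S.cprod (S.Rr (S.bp H q) (S.bp H q')) (S.Rr (S.bp H q') (S.bp H q'')) :=
    S.mem_cprod_of (S.Rr_mem _ _) (S.Rr_mem _ _) (S.Rr_mem _ _)
      (S.mem_Rr _ _) hp1 hp2
  have hB : S.Rr (S.bp H q) (S.bp H q'') ∈
      S.cprod (S.Rr (S.bp H q) (S.bp H q')) (S.Rr (S.bp H q') (S.bp H q'')) :=
    S.mem_cprod_of (S.Rr_mem _ _) (S.Rr_mem _ _) (S.Rr_mem _ _)
      (S.mem_Rr _ _) (S.mem_Rr _ _) (S.mem_Rr _ _)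
  have hni : ∀ w ∈ S.cprod (S.Rr (S.bp H q) (S.bp H q')) (S.Rr (S.bp H q') (S.bp H q'')),
      w ∉ S.thinRadical := by
    intro w hw hthin
    have hdw := S.dl_comp H (S.Rr_mem (S.bp H q) (S.bp H q'))
      (S.Rr_mem (S.bp H q') (S.bp H q'')) hw.1 hw
    have hid : S.dl H hw.1 = id := S.dl_thin H hthin
    refine h3 ?_
    have h5 := congrFun hdw q
    rw [hid] at h5
    simp only [id_eq, Function.comp_apply] at h5
    rw [S.dl_Rr_bp H q q', S.dl_Rr_bp H q' q''] at h5
    exact h5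
  have hsing := S.cprod_singleton H (S.Rr_mem (S.bp H q) (S.bp H q'))
    (S.Rr_mem (S.bp H q') (S.bp H q'')) (S.B_nonthin H h1) (S.B_nonthin H h2) hni hW hB
  have hWr : S.Rr (S.bp H (S.dl H hs0 q)) (sg t (sg t' (S.bp H (S.dl H hs0 q'')))) =
      dott (S.Rr (S.bp H (S.dl H hs0 q)) (S.bp H (S.dl H hs0 q''))) (dott t' t) := by
    rw [← S.sg_dott H.toNice ht'.1 ht.1]
    exact S.Rr_dott H.toNice (S.dott_thin H.toNice ht'.1 ht.1) _ _
  refine ⟨S.dott_thin H.toNice ht'.1 ht.1, ?_⟩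
  rw [← hWr]
  exact hsing

/-- the correction function for the class-shifting automorphism. -/
noncomputable def hh {p : ℕ} (H : S.Hyp p) {s0 : Set (X × X)} (hs0 : s0 ∈ S.rels)
    (q : S.Qt H.toNice) : Set (X × X) :=
  Classical.epsilon fun t => (q = S.qz H → t = schemeDiag X) ∧
    (q ≠ S.qz H → t ∈ S.Dd H hs0 (S.qz H) q)

lemma hh_ex {p : ℕ} (H : S.Hyp p) {s0 : Set (X × X)} (hs0 : s0 ∈ S.rels)
    (hnt : s0 ∉ S.thinRadical) (q : S.Qt H.toNice) :
    ∃ t : Set (X × X), (q = S.qz H → t = schemeDiag X) ∧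
      (q ≠ S.qz H → t ∈ S.Dd H hs0 (S.qz H) q) := by
  by_cases h : q = S.qz H
  · exact ⟨schemeDiag X, fun _ => rfl, fun hc => absurd h hc⟩
  · obtain ⟨t, ht⟩ := S.Dd_nonempty H hs0 hnt (S.qz H) q
    exact ⟨t, fun hc => absurd hc h, fun _ => ht⟩

lemma hh_qz {p : ℕ} (H : S.Hyp p) {s0 : Set (X × X)} (hs0 : s0 ∈ S.rels)
    (hnt : s0 ∉ S.thinRadical) : S.hh H hs0 (S.qz H) = schemeDiag X :=
  (Classical.epsilon_spec (S.hh_ex H hs0 hnt (S.qz H))).1 rfl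

lemma hh_mem {p : ℕ} (H : S.Hyp p) {s0 : Set (X × X)} (hs0 : s0 ∈ S.rels)
    (hnt : s0 ∉ S.thinRadical) {q : S.Qt H.toNice} (h : q ≠ S.qz H) :
    S.hh H hs0 q ∈ S.Dd H hs0 (S.qz H) q :=
  (Classical.epsilon_spec (S.hh_ex H hs0 hnt q)).2 h

lemma hh_thin {p : ℕ} (H : S.Hyp p) {s0 : Set (X × X)} (hs0 : s0 ∈ S.rels)
    (hnt : s0 ∉ S.thinRadical) (q : S.Qt H.toNice) :
    S.hh H hs0 q ∈ S.thinRadical := by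
  by_cases h : q = S.qz H
  · rw [h, S.hh_qz H hs0 hnt]
    exact S.diag_thin H.toNice.ne
  · exact (S.hh_mem H hs0 hnt h).1

lemma hh_cocycle {p : ℕ} (H : S.Hyp p) {s0 : Set (X × X)} (hs0 : s0 ∈ S.rels)
    (hnt : s0 ∉ S.thinRadical) {qx qy : S.Qt H.toNice} (h : qx ≠ qy) :
    dott (S.hh H hs0 qy) (schemeTransp (S.hh H hs0 qx)) ∈ S.Dd H hs0 qx qy := by
  by_cases hx : qx = S.qz H
  · subst hx
    rw [S.hh_qz H hs0 hnt, transp_diag, S.dott_diag H.toNice]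
    exact S.hh_mem H hs0 hnt (Ne.symm h)
  · by_cases hy : qy = S.qz H
    · subst hy
      rw [S.hh_qz H hs0 hnt,
        S.dott_diag_left H.toNice (S.thin_transp H.toNice (S.hh_thin H hs0 hnt qx))]
      exact S.Dd_transp H hs0 (S.hh_mem H hs0 hnt hx)
    · exact S.Dd_comp H hs0 hnt hx (fun hc => hy hc.symm) h
        (S.Dd_transp H hs0 (S.hh_mem H hs0 hnt hx)) (S.hh_mem H hs0 hnt hy)

lemma Rr_sg_sg (N : S.Nice) {t t' : Set (X × X)} (ht : t ∈ S.thinRadical)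
    (ht' : t' ∈ S.thinRadical) (u v : X) :
    S.Rr (sg t u) (sg t' v) = dott (dott (S.Rr u v) t') (schemeTransp t) := by
  rw [S.Rr_sg_left N ht, S.Rr_dott N ht']

lemma thin_quad (N : S.Nice) {e1 e2 t1 t2 : Set (X × X)} (he1 : e1 ∈ S.thinRadical)
    (he2 : e2 ∈ S.thinRadical) (ht1 : t1 ∈ S.thinRadical) (ht2 : t2 ∈ S.thinRadical) :
    dott (dott e2 t2) (schemeTransp (dott e1 t1)) =
      dott (dott e2 (schemeTransp e1)) (dott t2 (schemeTransp t1)) := by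
  have he1' := S.thin_transp N he1
  have ht1' := S.thin_transp N ht1
  rw [S.dott_transp N he1.1 ht1]
  refine S.thin_ext N
    (S.dott_thin N (S.dott_thin N he2 ht2) (S.dott_thin N he1' ht1'))
    (S.dott_thin N (S.dott_thin N he2 he1') (S.dott_thin N ht2 ht1')) fun z => ?_
  rw [S.sg_dott N (S.dott_thin N he2 ht2) (S.dott_thin N he1' ht1'),
    S.sg_dott N (S.dott_thin N he2 he1') (S.dott_thin N ht2 ht1'),
    S.sg_dott N he2 ht2, S.sg_dott N he1' ht1',
    S.sg_dott N he2 he1', S.sg_dott N ht2 ht1',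
    S.sg_swap N he1' ht2]

/-- the class-shifting map. -/
noncomputable def pi {p : ℕ} (H : S.Hyp p) {s0 : Set (X × X)} (hs0 : s0 ∈ S.rels)
    (x : X) : X :=
  sg (dott (S.hh H hs0 (S.qm H.toNice x)) (S.th H x))
    (S.bp H (S.dl H hs0 (S.qm H.toNice x)))

lemma qm_pi {p : ℕ} (H : S.Hyp p) {s0 : Set (X × X)} (hs0 : s0 ∈ S.rels)
    (hnt : s0 ∉ S.thinRadical) (x : X) :
    S.qm H.toNice (S.pi H hs0 x) = S.dl H hs0 (S.qm H.toNice x) := by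
  rw [pi, S.qm_sg H.toNice
    (S.dott_thin H.toNice (S.hh_thin H hs0 hnt _) (S.th_thin H x)), S.bp_spec]

lemma pi_Rr {p : ℕ} (H : S.Hyp p) {s0 : Set (X × X)} (hs0 : s0 ∈ S.rels)
    (hnt : s0 ∉ S.thinRadical) (x y : X) :
    S.Rr (S.pi H hs0 x) (S.pi H hs0 y) = S.Rr x y := by
  have N := H.toNice
  set qx := S.qm H.toNice x with hqxd
  set qy := S.qm H.toNice y with hqyd
  set ex := S.hh H hs0 qx with hexd
  set ey := S.hh H hs0 qy with heyd
  set tx := S.th H x with htxd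
  set ty := S.th H y with htyd
  set ax := S.bp H qx with haxd
  set ay := S.bp H qy with hayd
  set ax' := S.bp H (S.dl H hs0 qx) with haxd'
  set ay' := S.bp H (S.dl H hs0 qy) with hayd'
  have hex : ex ∈ S.thinRadical := S.hh_thin H hs0 hnt qx
  have hey : ey ∈ S.thinRadical := S.hh_thin H hs0 hnt qy
  have htx : tx ∈ S.thinRadical := S.th_thin H x
  have hty : ty ∈ S.thinRadical := S.th_thin H y
  set e := dott ey (schemeTransp ex) with hed
  have he : e ∈ S.thinRadical := S.dott_thin N hey (S.thin_transp N hex)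
  -- master equation
  have hmaster : dott (S.Rr ax' ay') e = S.Rr ax ay := by
    by_cases hq : qx = qy
    · have hqe : ex = ey := by rw [hexd, heyd, hq]
      have ha' : ax' = ay' := by rw [haxd', hayd', hq]
      have ha : ax = ay := by rw [haxd, hayd, hq]
      rw [hed, ← hqe, S.dott_transp_self N hex, S.dott_diag N, ha', S.Rr_diag, ha,
        S.Rr_diag]
    · exact (S.hh_cocycle H hs0 hnt hq).2
  have h1 : S.pi H hs0 x = sg (dott ex tx) ax' := rfl
  have h2 : S.pi H hs0 y = sg (dott ey ty) ay' := rfl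
  have h3 : x = sg tx ax := (S.th_spec H x).symm
  have h4 : y = sg ty ay := (S.th_spec H y).symm
  have hTx : dott ex tx ∈ S.thinRadical := S.dott_thin N hex htx
  have hTy : dott ey ty ∈ S.thinRadical := S.dott_thin N hey hty
  calc S.Rr (S.pi H hs0 x) (S.pi H hs0 y)
      = dott (dott (S.Rr ax' ay') (dott ey ty)) (schemeTransp (dott ex tx)) := by
        rw [h1, h2, S.Rr_sg_sg N hTx hTy]
    _ = dott (S.Rr ax' ay') (dott (dott ey ty) (schemeTransp (dott ex tx))) :=
        S.dott_assoc N hTy (S.thin_transp N hTx)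
    _ = dott (S.Rr ax' ay') (dott e (dott ty (schemeTransp tx))) := by
        rw [S.thin_quad N hex hey htx hty, hed]
    _ = dott (dott (S.Rr ax' ay') e) (dott ty (schemeTransp tx)) :=
        (S.dott_assoc N he (S.dott_thin N hty (S.thin_transp N htx))).symm
    _ = dott (S.Rr ax ay) (dott ty (schemeTransp tx)) := by rw [hmaster]
    _ = dott (dott (S.Rr ax ay) ty) (schemeTransp tx) :=
        (S.dott_assoc N hty (S.thin_transp N htx)).symm
    _ = S.Rr (sg tx ax) (sg ty ay) := (S.Rr_sg_sg N htx hty ax ay).symm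
    _ = S.Rr x y := by rw [← h3, ← h4]

lemma pi_faithful {p : ℕ} (H : S.Hyp p) {s0 : Set (X × X)} (hs0 : s0 ∈ S.rels)
    (hnt : s0 ∉ S.thinRadical) : S.IsFaithful (S.pi H hs0) := by
  intro x y s hs hxy
  rw [S.eq_Rr hs hxy, ← S.pi_Rr H hs0 hnt x y]
  exact S.mem_Rr _ _

lemma pi_inj {p : ℕ} (H : S.Hyp p) {s0 : Set (X × X)} (hs0 : s0 ∈ S.rels)
    (hnt : s0 ∉ S.thinRadical) : Function.Injective (S.pi H hs0) := by
  intro x y h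
  have h1 := S.pi_Rr H hs0 hnt x y
  rw [h, S.Rr_diag] at h1
  have := S.mem_Rr x y
  rw [← h1] at this
  exact this

open Classical in
/-- twisted partial translation. -/
noncomputable def tw (N : S.Nice) (q1 : S.Qt N) (k : Set (X × X)) (x : X) : X :=
  if S.qm N x = q1 then x else sg k x

lemma qm_tw (N : S.Nice) (q1 : S.Qt N) {k : Set (X × X)} (hk : k ∈ S.thinRadical)
    (x : X) : S.qm N (S.tw N q1 k x) = S.qm N x := by
  by_cases h : S.qm N x = q1
  · rw [tw, if_pos h]
  · rw [tw, if_neg h]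
    exact S.qm_sg N hk x

lemma tw_inj (N : S.Nice) (q1 : S.Qt N) {k : Set (X × X)} (hk : k ∈ S.thinRadical) :
    Function.Injective (S.tw N q1 k) := by
  intro x y h
  have hq : S.qm N x = S.qm N y := by
    rw [← S.qm_tw N q1 hk x, ← S.qm_tw N q1 hk y, h]
  by_cases hx : S.qm N x = q1
  · have hy : S.qm N y = q1 := hq ▸ hx
    rwa [tw, if_pos hx, tw, if_pos hy] at h
  · have hy : ¬ S.qm N y = q1 := fun hc => hx (hq ▸ hc)
    rw [tw, if_neg hx, tw, if_neg hy] at h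
    exact S.sg_inj N hk h

lemma tw_faithful (N : S.Nice) (q1 : S.Qt N) {k : Set (X × X)} (hk : k ∈ S.thinRadical)
    (hkK : ∀ u ∈ S.rels, u ∉ S.thinRadical → k ∈ S.Kst u) :
    S.IsFaithful (S.tw N q1 k) := by
  intro x y u hu hxy
  by_cases hx : S.qm N x = q1 <;> by_cases hy : S.qm N y = q1
  · rwa [tw, if_pos hx, tw, if_pos hy]
  · rw [tw, if_pos hx, tw, if_neg hy]
    have hne : S.qm N y ≠ S.qm N x := fun hc => hy (hc.trans hx)
    have hnu : u ∉ S.thinRadical := fun ht => hne (by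
      have : y = sg u x := (S.mem_thin_iff ht).mp hxy
      rw [this]; exact S.qm_sg N ht x)
    have hku := hkK u hu hnu
    have h1 : (x, sg k y) ∈ dott u k := mem_dott hxy
    rwa [hku.2] at h1
  · rw [tw, if_neg hx, tw, if_pos hy]
    have hne : S.qm N y ≠ S.qm N x := fun hc => hx (hc ▸ hy)
    have hnu : u ∉ S.thinRadical := fun ht => hne (by
      have : y = sg u x := (S.mem_thin_iff ht).mp hxy
      rw [this]; exact S.qm_sg N ht x)
    have hku := hkK u hu hnu
    have hku' : schemeTransp k ∈ S.Kst u := S.Kst_transp N hku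
    have h1 : (x, sg (schemeTransp k) y) ∈ dott u (schemeTransp k) := mem_dott hxy
    rw [hku'.2] at h1
    have h2 := S.faithful_sg N hk _ _ u hu h1
    rwa [S.sg_sg_transp N hk y] at h2
  · rw [tw, if_neg hx, tw, if_neg hy]
    exact S.faithful_sg N hk _ _ u hu hxy

/-- the thin relations as permutations. -/
noncomputable def sgE (N : S.Nice) {t : Set (X × X)} (ht : t ∈ S.thinRadical) :
    Equiv.Perm X where
  toFun := sg t
  invFun := sg (schemeTransp t)
  left_inv := S.sg_transp_sg N ht
  right_inv := S.sg_sg_transp N ht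

lemma sgE_apply (N : S.Nice) {t : Set (X × X)} (ht : t ∈ S.thinRadical) (x : X) :
    S.sgE N ht x = sg t x := rfl

end AssocScheme

open AssocScheme in
/-- a commutative p-scheme of order `p^n` with thin radical of order
`p^(n-1)` is schurian. -/
theorem stmt9 {X : Type*} [Fintype X] (S : AssocScheme X) (p n : ℕ)
    (hp : S.IsPScheme p) (hcomm : S.IsCommutative)
    (hcard : Fintype.card X = p ^ n)
    (hrad : S.nOrd S.thinRadical = p ^ (n - 1)) :
    S.IsSchurian := by
  classical
  have hppos : 0 < p := hp.1.pos
  have hXpos : 0 < Fintype.card X := by rw [hcard]; exact pow_pos hppos n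
  have hne : Nonempty X := Fintype.card_pos_iff.mp hXpos
  have hgood : ∀ r ∈ S.rels, S.val r ≠ 0 := by
    intro r hr
    obtain ⟨i, hi⟩ := hp.2.2 r hr
    rw [hi]
    exact (pow_pos hppos i).ne'
  have N : S.Nice := ⟨hcomm, hgood, hne⟩
  let G : Subgroup (Equiv.Perm X) :=
  { carrier := {g : Equiv.Perm X | S.IsFaithful ⇑g}
    mul_mem' := by
      intro a b ha hb
      intro x y s hs hxy
      have h1 := hb x y s hs hxy
      have h2 := ha (b x) (b y) s hs h1
      simpa using h2
    one_mem' := by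
      intro x y s hs hxy
      simpa using hxy
    inv_mem' := by
      intro g hg
      intro x y s hs hxy
      have h1 : (g (g⁻¹ x), g (g⁻¹ y)) ∈ S.Rr (g⁻¹ x) (g⁻¹ y) :=
        hg _ _ _ (S.Rr_mem _ _) (S.mem_Rr _ _)
      simp only [Equiv.Perm.coe_inv, Equiv.apply_symm_apply] at h1
      have h2 : S.Rr (g⁻¹ x) (g⁻¹ y) = s := S.rel_eq (S.Rr_mem _ _) hs h1 hxy
      rw [← h2]
      exact S.mem_Rr _ _ }
  have hGmem : ∀ g : Equiv.Perm X, S.IsFaithful ⇑g → g ∈ G := fun g h => h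
  have hGfaith : ∀ g : Equiv.Perm X, g ∈ G → S.IsFaithful ⇑g := fun g h => h
  by_cases hall : ∀ s ∈ S.rels, s ∈ S.thinRadical
  · -- all relations thin
    have horb : ∀ x y : X, {r : X × X | ∃ g ∈ G, (g x, g y) = r} = S.Rr x y := by
      intro x y
      ext ⟨x', y'⟩
      simp only [mem_setOf_eq]
      constructor
      · rintro ⟨g, hg, he⟩
        rw [← he]
        exact hGfaith g hg x y _ (S.Rr_mem x y) (S.mem_Rr x y)
      · intro hxy'
        have ht := hall _ (S.Rr_mem x x')
        have hg1x : S.sgE N ht x = x' := ((S.mem_thin_iff ht).mp (S.mem_Rr x x')).symm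
        have h2 : (S.sgE N ht x, S.sgE N ht y) ∈ S.Rr x y :=
          (S.faithful_sg N ht) x y _ (S.Rr_mem _ _) (S.mem_Rr _ _)
        rw [hg1x] at h2
        have hthin := hall _ (S.Rr_mem x y)
        have hy' : y' = sg (S.Rr x y) x' := (S.mem_thin_iff hthin).mp hxy'
        have hy'' : S.sgE N ht y = sg (S.Rr x y) x' := (S.mem_thin_iff hthin).mp h2
        exact ⟨S.sgE N ht, hGmem _ (S.faithful_sg N ht), by rw [hg1x, hy'', ← hy']⟩
    refine ⟨G, ?_, ?_⟩
    · intro x y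
      have ht := hall _ (S.Rr_mem x y)
      exact ⟨S.sgE N ht, hGmem _ (S.faithful_sg N ht),
        ((S.mem_thin_iff ht).mp (S.mem_Rr x y)).symm⟩
    · ext o
      simp only [mem_setOf_eq]
      constructor
      · intro ho
        obtain ⟨y0, hy0⟩ := S.row_nonempty ho (hgood o ho) (Classical.arbitrary X)
        exact ⟨(Classical.arbitrary X, y0), by rw [horb]; exact S.eq_Rr ho hy0⟩
      · rintro ⟨⟨x, y⟩, rfl⟩
        rw [horb]
        exact S.Rr_mem x y
  · push_neg at hall
    obtain ⟨s0, hs0, hnt⟩ := hall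
    have hn1 : 1 ≤ n := by
      by_contra hn
      have hn0 : n = 0 := by omega
      have hX1 : Fintype.card X = 1 := by rw [hcard, hn0, pow_zero]
      refine hnt ?_
      obtain ⟨y0, hy0⟩ := S.row_nonempty hs0 (hgood _ hs0) (Classical.arbitrary X)
      have hsub := Fintype.card_le_one_iff.mp (le_of_eq hX1)
      have hyx : y0 = Classical.arbitrary X := hsub _ _
      rw [hyx] at hy0
      have he := S.eq_Rr hs0 hy0
      rw [he, S.Rr_diag]
      exact S.diag_thin hne
    have hfin : S.thinRadical.Finite := Set.toFinite _
    have hT : Nat.card S.thinRadical = p ^ (n - 1) := by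
      rw [← hrad, nOrd, finsum_mem_eq_finite_toFinset_sum _ hfin,
        Finset.sum_congr rfl (fun t ht => (hfin.mem_toFinset.mp ht).2),
        Finset.sum_const, smul_eq_mul, mul_one, Nat.card_eq_card_finite_toFinset hfin]
    have hQ : Nat.card (S.Qt N) = p := by
      have h1 := S.card_eq_classes N
      rw [hcard, hT] at h1
      have h2 : p ^ n = p * p ^ (n - 1) := by
        rw [← pow_succ']
        congr 1
        omega
      rw [h2] at h1
      exact (Nat.eq_of_mul_eq_mul_right (pow_pos hppos (n - 1)) h1).symm
    have H : S.Hyp p := ⟨N, hp.1, hp.2.2, hQ⟩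
    have hpiB : Function.Bijective (S.pi H hs0) :=
      Finite.injective_iff_bijective.mp (S.pi_inj H hs0 hnt)
    let piE : Equiv.Perm X := Equiv.ofBijective _ hpiB
    have hpiEa : ∀ x, piE x = S.pi H hs0 x := fun x => rfl
    have hpiG : piE ∈ G := hGmem _ (by
      intro x y s hs hxy
      exact S.pi_faithful H hs0 hnt x y s hs hxy)
    have hpow : ∀ (j : ℕ) (x : X), (piE ^ j) x = (S.pi H hs0)^[j] x := by
      intro j
      induction j with
      | zero => intro x; simp
      | succ j ih =>
        intro x
        rw [pow_succ, Equiv.Perm.mul_apply, Function.iterate_succ_apply, ih (piE x), hpiEa]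
    have hqmiter : ∀ (j : ℕ) (x : X),
        S.qm N ((S.pi H hs0)^[j] x) = (S.dl H hs0)^[j] (S.qm N x) := by
      intro j
      induction j with
      | zero => intro x; simp
      | succ j ih =>
        intro x
        rw [Function.iterate_succ_apply, Function.iterate_succ_apply, ih (S.pi H hs0 x),
          S.qm_pi H hs0 hnt x]
    have htrans : ∀ x x' : X, ∃ g ∈ G, g x = x' := by
      intro x x'
      obtain ⟨j, hj⟩ := (S.dl_cycle H hs0 hnt).1 (S.qm N x) (S.qm N x')
      have hq : S.qm N ((S.pi H hs0)^[j] x) = S.qm N x' := by rw [hqmiter j x, hj]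
      have ht : S.Rr ((S.pi H hs0)^[j] x) x' ∈ S.thinRadical := (S.qm_eq_iff N).mp hq
      refine ⟨S.sgE N ht * piE ^ j,
        G.mul_mem (hGmem _ (S.faithful_sg N ht)) (pow_mem hpiG j), ?_⟩
      rw [Equiv.Perm.mul_apply, hpow j x, S.sgE_apply N ht]
      exact ((S.mem_thin_iff ht).mp (S.mem_Rr _ _)).symm
    have horb : ∀ x y : X, {r : X × X | ∃ g ∈ G, (g x, g y) = r} = S.Rr x y := by
      intro x y
      ext ⟨x', y'⟩
      simp only [mem_setOf_eq]
      constructor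
      · rintro ⟨g, hg, he⟩
        rw [← he]
        exact hGfaith g hg x y _ (S.Rr_mem x y) (S.mem_Rr x y)
      · intro hxy'
        obtain ⟨g1, hg1, hg1x⟩ := htrans x x'
        have hy'' : (x', g1 y) ∈ S.Rr x y := by
          have h3 := hGfaith g1 hg1 x y _ (S.Rr_mem x y) (S.mem_Rr x y)
          rwa [hg1x] at h3
        by_cases hthin : S.Rr x y ∈ S.thinRadical
        · refine ⟨g1, hg1, ?_⟩
          rw [hg1x]
          have e1 := (S.mem_thin_iff hthin).mp hxy'
          have e2 := (S.mem_thin_iff hthin).mp hy''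
          rw [e2, ← e1]
        · have hk : S.Rr (g1 y) y' ∈ S.thinRadical :=
            (S.qm_eq_iff N).mp (S.row_single_class H (S.Rr_mem x y) hy'' hxy')
          have hy'k : y' = sg (S.Rr (g1 y) y') (g1 y) := (S.mem_thin_iff hk).mp (S.mem_Rr _ _)
          have hkmem : S.Rr (g1 y) y' ∈ S.Kst (S.Rr x y) := by
            refine ⟨hk, ?_⟩
            have h1 : (x', sg (S.Rr (g1 y) y') (g1 y)) ∈ dott (S.Rr x y) (S.Rr (g1 y) y') :=
              mem_dott hy''
            rw [← hy'k] at h1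
            exact S.rel_eq (S.dott_rels N (S.Rr_mem x y) hk) (S.Rr_mem x y) h1 hxy'
          have hkK : ∀ u ∈ S.rels, u ∉ S.thinRadical → S.Rr (g1 y) y' ∈ S.Kst u := by
            intro u hu hnu
            rw [← S.Kst_eq_nonthin H (S.Rr_mem x y) hu hthin hnu]
            exact hkmem
          have hq2 : S.qm N (g1 y) ≠ S.qm N x' := by
            intro hc
            exact hthin (S.thin_of_qm_fix N (S.Rr_mem x y) hy'' hc)
          let ρ : Equiv.Perm X := Equiv.ofBijective _
            (Finite.injective_iff_bijective.mp (S.tw_inj N (S.qm N x') hk))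
          have hρa : ∀ z, ρ z = S.tw N (S.qm N x') (S.Rr (g1 y) y') z := fun z => rfl
          have hρG : ρ ∈ G := hGmem _ (by
            intro a b s hs hab
            exact S.tw_faithful N (S.qm N x') hk hkK a b s hs hab)
          refine ⟨ρ * g1, G.mul_mem hρG hg1, ?_⟩
          rw [Equiv.Perm.mul_apply, Equiv.Perm.mul_apply, hg1x, hρa, hρa]
          have e1 : S.tw N (S.qm N x') (S.Rr (g1 y) y') x' = x' := by
            rw [AssocScheme.tw, if_pos rfl]
          have e2 : S.tw N (S.qm N x') (S.Rr (g1 y) y') (g1 y) = y' := by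
            rw [AssocScheme.tw, if_neg hq2, ← hy'k]
          rw [e1, e2]
    refine ⟨G, htrans, ?_⟩
    ext o
    simp only [mem_setOf_eq]
    constructor
    · intro ho
      obtain ⟨y0, hy0⟩ := S.row_nonempty ho (hgood o ho) (Classical.arbitrary X)
      exact ⟨(Classical.arbitrary X, y0), by rw [horb]; exact S.eq_Rr ho hy0⟩
    · rintro ⟨⟨x, y⟩, rfl⟩
      rw [horb]
      exact S.Rr_mem x y
end
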